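/- arXiv:1510.03891 — 6 statements merged into one kernel-verified Lean document; each statement's English description precedes it below -/
import Mathlib

section
/- Let λ > 0 and let x : Ω → ℝ^N, y : Ω → ℝ^q be square-integrable random vectors. With W_out := (Γ + λI_N)⁻¹ C and a_out := μ_y − W_outᵀ μ_x, the characteristic error of the optimal readout satisfies MSE(W_out, a_out) = trace(Σ_y − W_outᵀ (Γ + 2λ I_N) W_out). -/
open Matrix MeasureTheory

private lemma l2_mul_int {Ω : Type*} [MeasureSpace Ω]
    {f g : Ω → ℝ} (hf : MemLp f 2 volume) (hg : MemLp g 2 volume) :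
    Integrable (fun ω => f ω * g ω) volume := by
  have h := hf.smul (𝕜 := ℝ) hg (r := 1)
    (hpqr := ⟨by rw [inv_one, ENNReal.inv_two_add_inv_two]⟩)
  rw [← memLp_one_iff_integrable]
  exact (by simpa [smul_eq_mul, mul_comm] using h : MemLp (f * g) 1 volume)

private lemma sq_int {Ω : Type*} [MeasureSpace Ω] {n : ℕ}
    (f : Fin n → Ω → ℝ) (hf : ∀ i, MemLp (f i) 2 volume) (c : Fin n → ℝ) :
    ∫ ω, (∑ i, c i * f i ω) ^ 2 = ∑ i, ∑ j, c i * c j * ∫ ω, f i ω * f j ω := by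
  have h : ∀ ω, (∑ i, c i * f i ω) ^ 2 = ∑ i, ∑ j, (c i * c j) * (f i ω * f j ω) := by
    intro ω
    rw [sq, Finset.sum_mul_sum]
    exact Finset.sum_congr rfl fun i _ => Finset.sum_congr rfl fun j _ => by ring
  simp_rw [h]
  rw [integral_finset_sum _ (fun i _ => integrable_finset_sum _
    (fun j _ => (l2_mul_int (hf i) (hf j)).const_mul _))]
  exact Finset.sum_congr rfl fun i _ => by
    rw [integral_finset_sum _ (fun j _ => (l2_mul_int (hf i) (hf j)).const_mul _)]
    exact Finset.sum_congr rfl fun j _ => integral_const_mul _ _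

private lemma cross_int {Ω : Type*} [MeasureSpace Ω] {n : ℕ}
    (f : Fin n → Ω → ℝ) (hf : ∀ i, MemLp (f i) 2 volume) (c : Fin n → ℝ)
    {g : Ω → ℝ} (hg : MemLp g 2 volume) :
    ∫ ω, (∑ i, c i * f i ω) * g ω = ∑ i, c i * ∫ ω, f i ω * g ω := by
  have h : ∀ ω, (∑ i, c i * f i ω) * g ω = ∑ i, c i * (f i ω * g ω) := by
    intro ω; rw [Finset.sum_mul]; exact Finset.sum_congr rfl fun i _ => by ring
  simp_rw [h]
  rw [integral_finset_sum _ (fun i _ => (l2_mul_int (hf i) hg).const_mul _)]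
  exact Finset.sum_congr rfl fun i _ => integral_const_mul _ _

/-- the characteristic error of the optimal readout satisfies
`MSE(W_out, a_out) = trace(Σ_y − W_outᵀ (Γ + 2λ I) W_out)`. -/
theorem stmt_2 {Ω : Type*} [MeasureSpace Ω] [IsProbabilityMeasure (volume : Measure Ω)]
    {N q : ℕ} (lam : ℝ) (hlam : 0 < lam)
    (x : Ω → Fin N → ℝ) (y : Ω → Fin q → ℝ)
    (hx : MemLp x 2 volume) (hy : MemLp y 2 volume)
    (μx : Fin N → ℝ) (hμx : μx = fun i => ∫ ω, x ω i)
    (μy : Fin q → ℝ) (hμy : μy = fun k => ∫ ω, y ω k)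
    (Γ : Matrix (Fin N) (Fin N) ℝ)
    (hΓ : Γ = Matrix.of fun i j => ∫ ω, (x ω i - μx i) * (x ω j - μx j))
    (C : Matrix (Fin N) (Fin q) ℝ)
    (hC : C = Matrix.of fun i k => ∫ ω, (x ω i - μx i) * (y ω k - μy k))
    (Sy : Matrix (Fin q) (Fin q) ℝ)
    (hSy : Sy = Matrix.of fun k l => ∫ ω, (y ω k - μy k) * (y ω l - μy l))
    (MSE : Matrix (Fin N) (Fin q) ℝ → (Fin q → ℝ) → ℝ)
    (hMSE : MSE = fun W a => ∫ ω, ∑ k, (Wᵀ.mulVec (x ω) k + a k - y ω k) ^ 2)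
    (Wout : Matrix (Fin N) (Fin q) ℝ)
    (hWout : Wout = (Γ + lam • (1 : Matrix (Fin N) (Fin N) ℝ))⁻¹ * C)
    (aout : Fin q → ℝ) (haout : aout = μy - Woutᵀ.mulVec μx) :
    MSE Wout aout =
      Matrix.trace (Sy - Woutᵀ * (Γ + (2 * lam) • (1 : Matrix (Fin N) (Fin N) ℝ)) * Wout) := by
  -- centered components are in L²
  have hu : ∀ i, MemLp (fun ω => x ω i - μx i) 2 volume := fun i =>
    ((ContinuousLinearMap.proj (R := ℝ) (φ := fun _ : Fin N => ℝ) i).comp_memLp' hx).sub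
      (memLp_const (μx i))
  have hv : ∀ k, MemLp (fun ω => y ω k - μy k) 2 volume := fun k =>
    ((ContinuousLinearMap.proj (R := ℝ) (φ := fun _ : Fin q => ℝ) k).comp_memLp' hy).sub
      (memLp_const (μy k))
  -- Γ is positive semidefinite
  have hΓpsd : Γ.PosSemidef := by
    rw [Matrix.posSemidef_iff_dotProduct_mulVec]
    constructor
    · ext i j
      simp only [hΓ, conjTranspose_apply, Matrix.of_apply, star_trivial]
      exact integral_congr_ae (Filter.Eventually.of_forall fun ω => mul_comm _ _)
    · intro w
      have h1 : star w ⬝ᵥ Γ *ᵥ w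
          = ∑ i, ∑ j, w i * w j * ∫ ω, (x ω i - μx i) * (x ω j - μx j) := by
        simp only [dotProduct, mulVec, star_trivial, hΓ, Matrix.of_apply, Finset.mul_sum]
        exact Finset.sum_congr rfl fun i _ => Finset.sum_congr rfl fun j _ => by ring
      rw [h1, ← sq_int (fun i ω => x ω i - μx i) hu w]
      exact integral_nonneg fun ω => sq_nonneg _
  -- Γ + λI is positive definite, hence invertible
  have hpd : (Γ + lam • (1 : Matrix (Fin N) (Fin N) ℝ)).PosDef := by
    refine Matrix.PosDef.posSemidef_add hΓpsd ?_
    have hdiag : lam • (1 : Matrix (Fin N) (Fin N) ℝ)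
        = Matrix.diagonal (fun _ => lam) := by
      ext i j
      by_cases h : i = j <;>
        simp [h, Matrix.one_apply, Matrix.diagonal_apply, Matrix.smul_apply]
    rw [hdiag]
    exact Matrix.PosDef.diagonal fun _ => hlam
  have hC2 : C = (Γ + lam • (1 : Matrix (Fin N) (Fin N) ℝ)) * Wout := by
    rw [hWout, ← Matrix.mul_assoc,
      Matrix.mul_nonsing_inv _ ((Matrix.isUnit_iff_isUnit_det _).mp hpd.isUnit),
      Matrix.one_mul]
  -- L² of the per-coordinate residual
  have hφ : ∀ k, MemLp
      (fun ω => (∑ i, Wout i k * (x ω i - μx i)) - (y ω k - μy k)) 2 volume := fun k =>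
    (memLp_finset_sum Finset.univ (fun i _ => (hu i).const_mul (Wout i k))).sub (hv k)
  -- rewrite the integrand
  simp only [hMSE]
  have hpt : (fun ω => ∑ k, (Woutᵀ.mulVec (x ω) k + aout k - y ω k) ^ 2)
      = fun ω => ∑ k,
          ((∑ i, Wout i k * (x ω i - μx i)) - (y ω k - μy k)) ^ 2 := by
    funext ω
    refine Finset.sum_congr rfl fun k _ => ?_
    congr 1
    simp only [haout, Matrix.mulVec, dotProduct, transpose_apply, Pi.sub_apply,
      mul_sub, Finset.sum_sub_distrib]
    ring
  rw [hpt, integral_finset_sum _ (fun k _ => (hφ k).integrable_sq)]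
  -- compute each summand
  have hk : ∀ k, (∫ ω, ((∑ i, Wout i k * (x ω i - μx i)) - (y ω k - μy k)) ^ 2)
      = (Woutᵀ * Γ * Wout) k k - 2 * (Woutᵀ * C) k k + Sy k k := by
    intro k
    have hA : MemLp (fun ω => ∑ i, Wout i k * (x ω i - μx i)) 2 volume :=
      memLp_finset_sum Finset.univ (fun i _ => (hu i).const_mul (Wout i k))
    have e1 : ∀ ω, ((∑ i, Wout i k * (x ω i - μx i)) - (y ω k - μy k)) ^ 2
        = ((∑ i, Wout i k * (x ω i - μx i)) ^ 2
            - 2 * ((∑ i, Wout i k * (x ω i - μx i)) * (y ω k - μy k)))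
          + (y ω k - μy k) * (y ω k - μy k) := by
      intro ω; ring
    simp_rw [e1]
    rw [integral_add (by
        exact (hA.integrable_sq).sub ((l2_mul_int hA (hv k)).const_mul 2))
      (l2_mul_int (hv k) (hv k)),
      integral_sub hA.integrable_sq ((l2_mul_int hA (hv k)).const_mul 2),
      integral_const_mul, sq_int (fun i ω => x ω i - μx i) hu,
      cross_int (fun i ω => x ω i - μx i) hu _ (hv k)]
    have eΓ : (Woutᵀ * Γ * Wout) k k
        = ∑ i, ∑ j, Wout i k * Wout j k * ∫ ω, (x ω i - μx i) * (x ω j - μx j) := by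
      simp only [Matrix.mul_apply, transpose_apply, hΓ, Matrix.of_apply,
        Finset.sum_mul]
      rw [Finset.sum_comm]
      exact Finset.sum_congr rfl fun i _ => Finset.sum_congr rfl fun j _ => by ring
    have eC : (Woutᵀ * C) k k
        = ∑ i, Wout i k * ∫ ω, (x ω i - μx i) * (y ω k - μy k) := by
      simp [Matrix.mul_apply, transpose_apply, hC]
    have eS : Sy k k = ∫ ω, (y ω k - μy k) * (y ω k - μy k) := by
      simp [hSy]
    rw [eΓ, eC, eS]
  simp_rw [hk]
  -- final matrix algebra
  have hWC : Woutᵀ * C = Woutᵀ * Γ * Wout + lam • (Woutᵀ * Wout) := by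
    rw [hC2, ← Matrix.mul_assoc, Matrix.mul_add, Matrix.add_mul, Matrix.mul_smul,
      Matrix.smul_mul, Matrix.mul_one]
  have hA2 : Sy - Woutᵀ * (Γ + (2 * lam) • (1 : Matrix (Fin N) (Fin N) ℝ)) * Wout
      = Sy - Woutᵀ * Γ * Wout - (2 * lam) • (Woutᵀ * Wout) := by
    rw [Matrix.mul_add, Matrix.mul_smul, Matrix.mul_one, Matrix.add_mul,
      Matrix.smul_mul, sub_add_eq_sub_sub]
  rw [hA2, Matrix.trace_sub, Matrix.trace_sub, Matrix.trace_smul, smul_eq_mul]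
  simp only [hWC, Matrix.add_apply, Matrix.smul_apply, smul_eq_mul,
    Matrix.trace, Matrix.diag_apply]
  rw [Finset.mul_sum, ← Finset.sum_sub_distrib, ← Finset.sum_sub_distrib]
  exact Finset.sum_congr rfl fun k _ => by ring
end

section
/- Let λ > 0 and let x : Ω → ℝ^N, y : Ω → ℝ^q be square-integrable random vectors. With W_out := (Γ + λI_N)⁻¹ C and a_out := μ_y − W_outᵀ μ_x, the characteristic error satisfies MSE(W_out, a_out) = trace( Σ_y − Cᵀ (Γ + λ I_N)⁻¹ (Γ + 2λ I_N) (Γ + λ I_N)⁻¹ C ). -/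
open Matrix MeasureTheory

lemma aux_int_mul {Ω : Type*} [MeasureSpace Ω] [IsProbabilityMeasure (volume : Measure Ω)]
    {f g : Ω → ℝ} (hf : MemLp f 2 volume) (hg : MemLp g 2 volume) :
    Integrable (fun ω => f ω * g ω) volume := by
  have h : Integrable (fun ω => (1/2 : ℝ) * (((f + g) ω) ^ 2 - f ω ^ 2 - g ω ^ 2)) volume :=
    (((hf.add hg).integrable_sq.sub hf.integrable_sq).sub hg.integrable_sq).const_mul _
  refine h.congr (Filter.Eventually.of_forall fun ω => ?_)
  simp only [Pi.add_apply]
  ring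

/-- the characteristic error of the optimal readout satisfies
`MSE(W_out, a_out) = trace(Σ_y − Cᵀ (Γ+λI)⁻¹ (Γ+2λI) (Γ+λI)⁻¹ C)`. -/
theorem stmt_3 {Ω : Type*} [MeasureSpace Ω] [IsProbabilityMeasure (volume : Measure Ω)]
    {N q : ℕ} (lam : ℝ) (hlam : 0 < lam)
    (x : Ω → Fin N → ℝ) (y : Ω → Fin q → ℝ)
    (hx : MemLp x 2 volume) (hy : MemLp y 2 volume)
    (μx : Fin N → ℝ) (hμx : μx = fun i => ∫ ω, x ω i)
    (μy : Fin q → ℝ) (hμy : μy = fun k => ∫ ω, y ω k)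
    (Γ : Matrix (Fin N) (Fin N) ℝ)
    (hΓ : Γ = Matrix.of fun i j => ∫ ω, (x ω i - μx i) * (x ω j - μx j))
    (C : Matrix (Fin N) (Fin q) ℝ)
    (hC : C = Matrix.of fun i k => ∫ ω, (x ω i - μx i) * (y ω k - μy k))
    (Sy : Matrix (Fin q) (Fin q) ℝ)
    (hSy : Sy = Matrix.of fun k l => ∫ ω, (y ω k - μy k) * (y ω l - μy l))
    (MSE : Matrix (Fin N) (Fin q) ℝ → (Fin q → ℝ) → ℝ)
    (hMSE : MSE = fun W a => ∫ ω, ∑ k, (Wᵀ.mulVec (x ω) k + a k - y ω k) ^ 2)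
    (Wout : Matrix (Fin N) (Fin q) ℝ)
    (hWout : Wout = (Γ + lam • (1 : Matrix (Fin N) (Fin N) ℝ))⁻¹ * C)
    (aout : Fin q → ℝ) (haout : aout = μy - Woutᵀ.mulVec μx) :
    MSE Wout aout =
      Matrix.trace (Sy -
        Cᵀ * (Γ + lam • (1 : Matrix (Fin N) (Fin N) ℝ))⁻¹
          * (Γ + (2 * lam) • (1 : Matrix (Fin N) (Fin N) ℝ))
          * (Γ + lam • (1 : Matrix (Fin N) (Fin N) ℝ))⁻¹ * C) := by
  -- component-wise square integrability
  have hxc : ∀ i, MemLp (fun ω => x ω i - μx i) 2 volume := fun i => by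
    have h1 : MemLp (fun ω => x ω i) 2 volume :=
      (ContinuousLinearMap.proj (R := ℝ) (φ := fun _ : Fin N => ℝ) i).comp_memLp' hx
    exact h1.sub (memLp_const _)
  have hyc : ∀ k, MemLp (fun ω => y ω k - μy k) 2 volume := fun k => by
    have h1 : MemLp (fun ω => y ω k) 2 volume :=
      (ContinuousLinearMap.proj (R := ℝ) (φ := fun _ : Fin q => ℝ) k).comp_memLp' hy
    exact h1.sub (memLp_const _)
  have hxx : ∀ i j, Integrable (fun ω => (x ω i - μx i) * (x ω j - μx j)) volume :=
    fun i j => aux_int_mul (hxc i) (hxc j)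
  have hxy : ∀ i k, Integrable (fun ω => (x ω i - μx i) * (y ω k - μy k)) volume :=
    fun i k => aux_int_mul (hxc i) (hyc k)
  set A := Γ + lam • (1 : Matrix (Fin N) (Fin N) ℝ) with hAdef
  -- symmetry
  have hΓsym : Γᵀ = Γ := by
    rw [hΓ]; ext i j
    simp only [Matrix.transpose_apply, Matrix.of_apply]
    simp_rw [mul_comm]
  have hAsym : Aᵀ = A := by
    rw [hAdef, Matrix.transpose_add, Matrix.transpose_smul, Matrix.transpose_one, hΓsym]
  -- positive semidefiniteness of Γ
  have hPSD : ∀ v : Fin N → ℝ, 0 ≤ v ⬝ᵥ Γ.mulVec v := by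
    intro v
    have key : v ⬝ᵥ Γ.mulVec v = ∫ ω, (∑ i, v i * (x ω i - μx i)) ^ 2 := by
      have hpt : ∀ ω : Ω, (∑ i, v i * (x ω i - μx i)) ^ 2
          = ∑ i, ∑ j, (v i * v j) * ((x ω i - μx i) * (x ω j - μx j)) := by
        intro ω
        rw [sq, Finset.sum_mul_sum]
        refine Finset.sum_congr rfl fun i _ => Finset.sum_congr rfl fun j _ => by ring
      simp_rw [hpt]
      rw [integral_finset_sum _ (fun i _ =>
        integrable_finset_sum _ (fun j _ => (hxx i j).const_mul _))]
      simp_rw [integral_finset_sum _ (fun j _ => (hxx _ j).const_mul _), integral_const_mul]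
      simp only [dotProduct, Matrix.mulVec, Finset.mul_sum, hΓ, Matrix.of_apply]
      refine Finset.sum_congr rfl fun i _ => Finset.sum_congr rfl fun j _ => by ring
    rw [key]
    exact integral_nonneg fun ω => sq_nonneg _
  -- A is positive definite, hence invertible
  have hApd : A.PosDef := by
    refine Matrix.PosDef.of_dotProduct_mulVec_pos ?_ ?_
    · rw [Matrix.IsHermitian]
      ext i j
      rw [Matrix.conjTranspose_apply, star_trivial]
      exact congrFun (congrFun hAsym i) j
    · intro v hv
      have hsv : star v = v := by
        funext i; exact star_trivial _
      rw [hsv, hAdef, Matrix.add_mulVec, Matrix.smul_mulVec, Matrix.one_mulVec,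
        dotProduct_add, dotProduct_smul]
      have hvv : 0 < v ⬝ᵥ v := by
        obtain ⟨i, hi⟩ := Function.ne_iff.mp hv
        rw [Pi.zero_apply] at hi
        have h1 : (0:ℝ) < v i * v i := mul_self_pos.mpr hi
        exact h1.trans_le (Finset.single_le_sum (f := fun j => v j * v j)
          (fun j _ => mul_self_nonneg _) (Finset.mem_univ i))
      have := hPSD v
      have h2 : 0 < lam * (v ⬝ᵥ v) := mul_pos hlam hvv
      simp only [smul_eq_mul]
      linarith
  have hAdet : IsUnit A.det := isUnit_iff_ne_zero.mpr hApd.det_pos.ne'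
  have hBA : A⁻¹ * A = 1 := A.nonsing_inv_mul hAdet
  have hAinvT : A⁻¹ᵀ = A⁻¹ := by rw [Matrix.transpose_nonsing_inv, hAsym]
  -- value of the MSE as an explicit sum
  have hMSEval : MSE Wout aout =
      ∑ k, ((∑ i, ∑ j, (Wout i k * Wout j k) * Γ i j)
        - 2 * (∑ i, Wout i k * C i k) + Sy k k) := by
    rw [hMSE]
    simp only []
    have hpt : ∀ ω : Ω, ∑ k, (Woutᵀ.mulVec (x ω) k + aout k - y ω k) ^ 2
        = ∑ k, ((∑ i, ∑ j, (Wout i k * Wout j k) * ((x ω i - μx i) * (x ω j - μx j)))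
            - 2 * (∑ i, Wout i k * ((x ω i - μx i) * (y ω k - μy k)))
            + (y ω k - μy k) ^ 2) := by
      intro ω
      refine Finset.sum_congr rfl fun k _ => ?_
      have h1 : Woutᵀ.mulVec (x ω) k + aout k - y ω k
          = (∑ i, Wout i k * (x ω i - μx i)) - (y ω k - μy k) := by
        simp only [haout, Pi.sub_apply, Matrix.mulVec, dotProduct, Matrix.transpose_apply,
          mul_sub, Finset.sum_sub_distrib]
        ring
      rw [h1, sub_sq]
      have hS2 : (∑ i, Wout i k * (x ω i - μx i)) ^ 2
          = ∑ i, ∑ j, (Wout i k * Wout j k) * ((x ω i - μx i) * (x ω j - μx j)) := by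
        rw [sq, Finset.sum_mul_sum]
        exact Finset.sum_congr rfl fun i _ => Finset.sum_congr rfl fun j _ => by ring
      have hSt : (∑ i, Wout i k * (x ω i - μx i)) * (y ω k - μy k)
          = ∑ i, Wout i k * ((x ω i - μx i) * (y ω k - μy k)) := by
        rw [Finset.sum_mul]
        exact Finset.sum_congr rfl fun i _ => by ring
      rw [hS2, mul_assoc, hSt]
    rw [show (∫ ω, ∑ k, (Woutᵀ.mulVec (x ω) k + aout k - y ω k) ^ 2)
        = ∫ ω, ∑ k, ((∑ i, ∑ j, (Wout i k * Wout j k) * ((x ω i - μx i) * (x ω j - μx j)))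
            - 2 * (∑ i, Wout i k * ((x ω i - μx i) * (y ω k - μy k)))
            + (y ω k - μy k) ^ 2) from by
      congr 1; funext ω; exact hpt ω]
    have iF : ∀ k, Integrable (fun ω =>
        ∑ i, ∑ j, (Wout i k * Wout j k) * ((x ω i - μx i) * (x ω j - μx j))) volume :=
      fun k => integrable_finset_sum _ fun i _ =>
        integrable_finset_sum _ fun j _ => (hxx i j).const_mul _
    have iG : ∀ k, Integrable (fun ω =>
        ∑ i, Wout i k * ((x ω i - μx i) * (y ω k - μy k))) volume :=
      fun k => integrable_finset_sum _ fun i _ => (hxy i k).const_mul _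
    have iH : ∀ k, Integrable (fun ω => (y ω k - μy k) ^ 2) volume :=
      fun k => (hyc k).integrable_sq
    have iG2 : ∀ k, Integrable (fun ω =>
        2 * ∑ i, Wout i k * ((x ω i - μx i) * (y ω k - μy k))) volume :=
      fun k => (iG k).const_mul 2
    have iFG : ∀ k, Integrable (fun ω =>
        (∑ i, ∑ j, (Wout i k * Wout j k) * ((x ω i - μx i) * (x ω j - μx j)))
          - 2 * ∑ i, Wout i k * ((x ω i - μx i) * (y ω k - μy k))) volume :=
      fun k => by exact (iF k).sub (iG2 k)
    have iAll : ∀ k ∈ (Finset.univ : Finset (Fin q)), Integrable (fun ω =>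
        (∑ i, ∑ j, (Wout i k * Wout j k) * ((x ω i - μx i) * (x ω j - μx j)))
          - 2 * (∑ i, Wout i k * ((x ω i - μx i) * (y ω k - μy k)))
          + (y ω k - μy k) ^ 2) volume :=
      fun k _ => by exact (iFG k).add (iH k)
    rw [integral_finset_sum _ iAll]
    refine Finset.sum_congr rfl fun k _ => ?_
    rw [integral_add (iFG k) (iH k), integral_sub (iF k) (iG2 k), integral_const_mul]
    congr 1
    · congr 1
      · rw [integral_finset_sum _ (fun i _ =>
          integrable_finset_sum _ (fun j _ => (hxx i j).const_mul _))]
        refine Finset.sum_congr rfl fun i _ => ?_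
        rw [integral_finset_sum _ (fun j _ => (hxx i j).const_mul _)]
        refine Finset.sum_congr rfl fun j _ => ?_
        rw [integral_const_mul, hΓ]
        rfl
      · congr 1
        rw [integral_finset_sum _ (fun i _ => (hxy i k).const_mul _)]
        refine Finset.sum_congr rfl fun i _ => ?_
        rw [integral_const_mul, hC]
        rfl
    · rw [hSy]
      simp only [Matrix.of_apply]
      simp_rw [sq]
  -- identify the sums with traces
  have htr : MSE Wout aout =
      Matrix.trace (Woutᵀ * Γ * Wout) - 2 * Matrix.trace (Woutᵀ * C) + Matrix.trace Sy := by
    rw [hMSEval, Matrix.trace, Matrix.trace, Matrix.trace, Finset.mul_sum,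
      ← Finset.sum_sub_distrib, ← Finset.sum_add_distrib]
    refine Finset.sum_congr rfl fun k _ => ?_
    simp only [Matrix.diag_apply, Matrix.mul_apply, Matrix.transpose_apply, Finset.sum_mul]
    congr 2
    rw [Finset.sum_comm]
    exact Finset.sum_congr rfl fun j _ => Finset.sum_congr rfl fun i _ => by ring
  -- final matrix algebra
  have hWt : Woutᵀ = Cᵀ * A⁻¹ := by
    rw [hWout, Matrix.transpose_mul, hAinvT]
  have hfrag : Cᵀ * A⁻¹ * A = Cᵀ := by
    rw [Matrix.mul_assoc, hBA, Matrix.mul_one]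
  have h2A : Γ + (2 * lam) • (1 : Matrix (Fin N) (Fin N) ℝ) = A + A - Γ := by
    rw [hAdef, two_mul, add_smul]
    abel
  have hkey : Cᵀ * A⁻¹ * (Γ + (2 * lam) • (1 : Matrix (Fin N) (Fin N) ℝ)) * A⁻¹ * C
      = (Woutᵀ * C + Woutᵀ * C) - Woutᵀ * Γ * Wout := by
    rw [h2A]
    have e1 : Cᵀ * A⁻¹ * (A + A - Γ) = Cᵀ + Cᵀ - Cᵀ * A⁻¹ * Γ := by
      rw [Matrix.mul_sub, Matrix.mul_add, hfrag]
    rw [e1, Matrix.sub_mul, Matrix.add_mul, Matrix.sub_mul, Matrix.add_mul,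
      hWt, hWout]
    rw [Matrix.mul_assoc (Cᵀ * A⁻¹ * Γ) A⁻¹ C]
  rw [htr, Matrix.trace_sub, hkey, Matrix.trace_sub, Matrix.trace_add]
  ring
end

section
/- Let Γ ∈ M_N(ℝ) be symmetric, Σ_y ∈ M_q(ℝ) symmetric, and C ∈ M_{N,q}(ℝ) be such that the block matrix [[Γ, C],[Cᵀ, Σ_y]] ∈ M_{N+q}(ℝ) is positive semidefinite, and let λ > 0. Then 0 ≤ trace( Cᵀ (Γ + λ I_N)⁻¹ (Γ + 2λ I_N) (Γ + λ I_N)⁻¹ C ) ≤ trace(Σ_y). Consequently, if trace(Σ_y) > 0, the memory capacity C_H := trace(Cᵀ(Γ+λI_N)⁻¹(Γ+2λI_N)(Γ+λI_N)⁻¹C)/trace(Σ_y) satisfies 0 ≤ C_H ≤ 1. -/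
open Matrix

private lemma trace_nonneg_of_posSemidef {n : ℕ} {P : Matrix (Fin n) (Fin n) ℝ}
    (hP : P.PosSemidef) : 0 ≤ P.trace := by
  rw [Matrix.trace]
  apply Finset.sum_nonneg
  intro i _
  exact hP.diag_nonneg

/-- if the joint covariance block matrix is positive semidefinite, the
memory capacity numerator is between `0` and `trace Σ_y`, so the capacity is in `[0,1]`. -/
theorem stmt_4 {N q : ℕ}
    (Γ : Matrix (Fin N) (Fin N) ℝ) (hΓ : Γᵀ = Γ)
    (Sy : Matrix (Fin q) (Fin q) ℝ) (hSy : Syᵀ = Sy)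
    (C : Matrix (Fin N) (Fin q) ℝ)
    (hblock : (Matrix.fromBlocks Γ C Cᵀ Sy).PosSemidef)
    (lam : ℝ) (hlam : 0 < lam) :
    0 ≤ Matrix.trace (Cᵀ * (Γ + lam • (1 : Matrix (Fin N) (Fin N) ℝ))⁻¹
        * (Γ + (2 * lam) • (1 : Matrix (Fin N) (Fin N) ℝ))
        * (Γ + lam • (1 : Matrix (Fin N) (Fin N) ℝ))⁻¹ * C) ∧
    Matrix.trace (Cᵀ * (Γ + lam • (1 : Matrix (Fin N) (Fin N) ℝ))⁻¹
        * (Γ + (2 * lam) • (1 : Matrix (Fin N) (Fin N) ℝ))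
        * (Γ + lam • (1 : Matrix (Fin N) (Fin N) ℝ))⁻¹ * C) ≤ Matrix.trace Sy ∧
    (0 < Matrix.trace Sy →
      0 ≤ Matrix.trace (Cᵀ * (Γ + lam • (1 : Matrix (Fin N) (Fin N) ℝ))⁻¹
            * (Γ + (2 * lam) • (1 : Matrix (Fin N) (Fin N) ℝ))
            * (Γ + lam • (1 : Matrix (Fin N) (Fin N) ℝ))⁻¹ * C) / Matrix.trace Sy ∧
      Matrix.trace (Cᵀ * (Γ + lam • (1 : Matrix (Fin N) (Fin N) ℝ))⁻¹
            * (Γ + (2 * lam) • (1 : Matrix (Fin N) (Fin N) ℝ))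
            * (Γ + lam • (1 : Matrix (Fin N) (Fin N) ℝ))⁻¹ * C) / Matrix.trace Sy ≤ 1) := by
  set A := Γ + lam • (1 : Matrix (Fin N) (Fin N) ℝ) with hA
  set M := Γ + (2 * lam) • (1 : Matrix (Fin N) (Fin N) ℝ) with hM
  -- Γ is psd
  have hΓpsd : Γ.PosSemidef := by
    have := hblock.submatrix (Sum.inl : Fin N → Fin N ⊕ Fin q)
    exact this
  have hone : (lam • (1 : Matrix (Fin N) (Fin N) ℝ)).PosDef := by
    rw [Matrix.smul_one_eq_diagonal]
    exact Matrix.posDef_diagonal_iff.mpr fun _ => hlam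
  have hApd : A.PosDef := Matrix.PosDef.posSemidef_add hΓpsd hone
  have hone2 : ((2 * lam) • (1 : Matrix (Fin N) (Fin N) ℝ)).PosDef := by
    rw [Matrix.smul_one_eq_diagonal]
    exact Matrix.posDef_diagonal_iff.mpr fun _ => by linarith
  have hMpd : M.PosDef := Matrix.PosDef.posSemidef_add hΓpsd hone2
  have hAdet : IsUnit A.det := hApd.det_pos.ne'.isUnit
  have hAT : Aᵀ = A := by
    rw [hA, Matrix.transpose_add, hΓ, Matrix.transpose_smul, Matrix.transpose_one]
  have hAiT : (A⁻¹)ᵀ = A⁻¹ := by rw [Matrix.transpose_nonsing_inv, hAT]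
  set W : Matrix (Fin N) (Fin q) ℝ := A⁻¹ * C with hW
  -- numerator matrix = Wᵀ M W
  have hnum : Cᵀ * A⁻¹ * M * A⁻¹ * C = Wᵀ * M * W := by
    rw [hW, Matrix.transpose_mul, hAiT]
    rw [Matrix.mul_assoc]
  -- numerator psd
  have hNumPsd : (Cᵀ * A⁻¹ * M * A⁻¹ * C).PosSemidef := by
    rw [hnum]
    have := hMpd.posSemidef.conjTranspose_mul_mul_same W
    simpa using this
  -- key: Sy - num psd
  have hKey : (Sy - Cᵀ * A⁻¹ * M * A⁻¹ * C).PosSemidef := by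
    have h1 := hblock.conjTranspose_mul_mul_same (Matrix.fromRows (-W) (1 : Matrix (Fin q) (Fin q) ℝ))
    have h2 : (Matrix.fromRows (-W) (1 : Matrix (Fin q) (Fin q) ℝ))ᴴ *
        Matrix.fromBlocks Γ C Cᵀ Sy * Matrix.fromRows (-W) (1 : Matrix (Fin q) (Fin q) ℝ)
        = Sy - Cᵀ * A⁻¹ * M * A⁻¹ * C := by
      rw [Matrix.mul_assoc, Matrix.fromBlocks_mul_fromRows]
      have : (Matrix.fromRows (-W) (1 : Matrix (Fin q) (Fin q) ℝ))ᴴ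
          = Matrix.fromCols (-W)ᵀ (1 : Matrix (Fin q) (Fin q) ℝ) := by
        rw [Matrix.conjTranspose_eq_transpose_of_trivial, Matrix.transpose_fromRows,
          Matrix.transpose_one]
      rw [this, Matrix.fromCols_mul_fromRows]
      -- now pure matrix algebra
      have hWT : Wᵀ = Cᵀ * A⁻¹ := by rw [hW, Matrix.transpose_mul, hAiT]
      have hGam : Γ = A - lam • 1 := by rw [hA]; abel
      have hMA : M = A + lam • 1 := by rw [hM, hA, two_mul, add_smul]; abel
      have hAinvA : A⁻¹ * A * A⁻¹ = A⁻¹ := by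
        rw [Matrix.nonsing_inv_mul _ hAdet, Matrix.one_mul]
      rw [hW]
      have hc : Cᵀ * A⁻¹ * A * A⁻¹ * C = Cᵀ * A⁻¹ * C := by
        rw [Matrix.mul_assoc (Cᵀ * A⁻¹), Matrix.mul_assoc (Cᵀ * A⁻¹),
          Matrix.mul_nonsing_inv _ hAdet, Matrix.one_mul]
      simp only [Matrix.transpose_neg, Matrix.transpose_mul, hAiT, hΓ, Matrix.mul_one,
        Matrix.one_mul, Matrix.neg_mul, Matrix.mul_neg, Matrix.mul_add, Matrix.add_mul,
        Matrix.mul_sub, Matrix.sub_mul]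
      rw [hGam, hMA]
      simp only [Matrix.mul_add, Matrix.add_mul, Matrix.mul_sub, Matrix.sub_mul,
        ← Matrix.mul_assoc]
      rw [hc]
      abel
    rw [h2] at h1
    exact h1
  -- conclusions
  have h0 : 0 ≤ Matrix.trace (Cᵀ * A⁻¹ * M * A⁻¹ * C) := trace_nonneg_of_posSemidef hNumPsd
  have hle : Matrix.trace (Cᵀ * A⁻¹ * M * A⁻¹ * C) ≤ Matrix.trace Sy := by
    have := trace_nonneg_of_posSemidef hKey
    rw [Matrix.trace_sub] at this
    linarith
  refine ⟨h0, hle, fun hpos => ⟨div_nonneg h0 hpos.le, ?_⟩⟩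
  rw [div_le_one hpos]
  exact hle
end

section
/- Let N ≥ 1, ξ > 0 and Φ ∈ ℝ with |Φ| < 1 − e^{−ξ}. Define the matrix A ∈ M_N(ℝ) by: A_{ij} = e^{−(i−j)ξ} Φ for 1 ≤ j ≤ i ≤ N with (i,j) ≠ (N,N) and j ≤ N−1, A_{ij} = 0 for i < j ≤ N−1, A_{iN} = e^{−iξ} for 1 ≤ i ≤ N−1, and A_{NN} = Φ + e^{−Nξ}. Then every complex eigenvalue of A has modulus strictly less than 1, i.e., the spectral radius of A satisfies ρ(A) < 1. -/
open Matrix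

/-- the connectivity matrix of a discrete-time time-delay reservoir
linearized at a stable fixed point (with `|Φ| < 1 − e^{−ξ}`) has all its complex
eigenvalues of modulus strictly less than one.  Indices here are 0-based: the entry
`A i j` corresponds to the paper's entry `A_{(i+1)(j+1)}`. -/
theorem stmt_12 {N : ℕ} (hN : 1 ≤ N) (ξ Φ : ℝ) (hξ : 0 < ξ)
    (hΦ : |Φ| < 1 - Real.exp (-ξ))
    (A : Matrix (Fin N) (Fin N) ℝ)
    (hA : ∀ i j : Fin N,
      A i j =
        if j.val = N - 1 then
          (if i.val = N - 1 then Φ + Real.exp (-(N : ℝ) * ξ)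
           else Real.exp (-((i.val : ℝ) + 1) * ξ))
        else if j.val ≤ i.val then Real.exp (-((i.val : ℝ) - (j.val : ℝ)) * ξ) * Φ
        else 0) :
    ∀ μ ∈ spectrum ℂ (A.map (Complex.ofReal : ℝ → ℂ)), ‖μ‖ < 1 := by
  intro μ hμ
  set r := Real.exp (-ξ) with hr
  have hr0 : 0 < r := Real.exp_pos _
  have hr1 : r < 1 := Real.exp_lt_one_iff.mpr (by linarith)
  have hΦ0 : (0:ℝ) ≤ |Φ| := abs_nonneg Φ
  have hpow : ∀ m : ℕ, Real.exp (-(m:ℝ) * ξ) = r ^ m := by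
    intro m
    rw [hr, ← Real.exp_nat_mul]
    ring_nf
  -- key geometric bound
  have key : ∀ m : ℕ, |Φ| * (∑ k ∈ Finset.range (m+1), r ^ k) + r ^ (m+1) < 1 := by
    intro m
    have hS : (1 - r) * (∑ k ∈ Finset.range (m+1), r ^ k) = 1 - r ^ (m+1) := by
      have h := geom_sum_mul r (m+1)
      nlinarith [h]
    have hSpos : 0 < ∑ k ∈ Finset.range (m+1), r ^ k :=
      Finset.sum_pos (fun k _ => pow_pos hr0 k) ⟨0, Finset.mem_range.mpr (Nat.succ_pos m)⟩
    nlinarith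
  -- Gershgorin
  have hμ' : Module.End.HasEigenvalue
      (Matrix.toLin' (A.map (Complex.ofReal : ℝ → ℂ))) μ := by
    rw [Module.End.hasEigenvalue_iff_mem_spectrum]
    have h2 : spectrum ℂ ((Matrix.toLinAlgEquiv (Pi.basisFun ℂ (Fin N)))
        (A.map (Complex.ofReal : ℝ → ℂ))) = spectrum ℂ (A.map (Complex.ofReal : ℝ → ℂ)) :=
      AlgEquiv.spectrum_eq _ _
    exact h2.symm ▸ hμ
  obtain ⟨k, hk⟩ := eigenvalue_mem_ball hμ'
  rw [Metric.mem_closedBall, dist_eq_norm] at hk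
  set M := A.map (Complex.ofReal : ℝ → ℂ) with hM
  have hsum : ∑ j : Fin N, ‖M k j‖ =
      ‖M k k‖ + ∑ j ∈ Finset.univ.erase k, ‖M k j‖ := by
    rw [← Finset.add_sum_erase _ _ (Finset.mem_univ k)]
  have hμle : ‖μ‖ ≤ ∑ j : Fin N, ‖M k j‖ := by
    have := norm_sub_norm_le μ (M k k)
    rw [hsum]
    linarith [this.trans hk]
  refine lt_of_le_of_lt hμle ?_
  -- now bound the row sum
  set m := k.val with hmdef
  have hm : m < N := k.isLt
  -- the row as a function of a natural index
  have hrow : ∀ j : Fin N, ‖M k j‖ =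
      (fun j : ℕ => if j = N - 1 then
          (if m = N - 1 then |Φ + r ^ N| else r ^ (m+1))
        else if j ≤ m then r ^ (m - j) * |Φ| else 0) j.val := by
    intro j
    simp only [hM, Matrix.map_apply, Complex.norm_real, Real.norm_eq_abs, hA k j]
    by_cases h1 : j.val = N - 1
    · simp only [h1, if_true]
      by_cases h2 : m = N - 1
      · rw [if_pos h2, if_pos h2, hpow N]
      · rw [if_neg h2, if_neg h2]
        have : (-((k.val : ℝ) + 1) * ξ) = -((m+1 : ℕ) : ℝ) * ξ := by push_cast [hmdef]; ring
        rw [this, hpow (m+1), abs_of_pos (pow_pos hr0 _)]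
    · rw [if_neg h1, if_neg h1]
      by_cases h3 : j.val ≤ m
      · rw [if_pos h3, if_pos h3]
        have : (-((k.val : ℝ) - (j.val : ℝ)) * ξ) = -(((m - j.val : ℕ)) : ℝ) * ξ := by
          rw [Nat.cast_sub h3]
        rw [this, hpow, abs_mul, abs_of_pos (pow_pos hr0 _)]
      · rw [if_neg h3, if_neg h3, abs_zero]
  calc ∑ j : Fin N, ‖M k j‖
      = ∑ j ∈ Finset.range N, (fun j : ℕ => if j = N - 1 then
          (if m = N - 1 then |Φ + r ^ N| else r ^ (m+1))
        else if j ≤ m then r ^ (m - j) * |Φ| else 0) j := by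
        rw [← Fin.sum_univ_eq_sum_range]
        exact Finset.sum_congr rfl fun j _ => hrow j
    _ < 1 := by
        obtain ⟨n, rfl⟩ : ∃ n, N = n + 1 := ⟨N - 1, (Nat.succ_pred_eq_of_pos hN).symm⟩
        rw [Finset.sum_range_succ]
        simp only [Nat.add_sub_cancel, if_true]
        have hne : ∀ j ∈ Finset.range n, (if j = n then
            (if m = n then |Φ + r ^ (n+1)| else r ^ (m+1))
          else if j ≤ m then r ^ (m - j) * |Φ| else 0)
            = (if j ≤ m then r ^ (m - j) * |Φ| else 0) := by
          intro j hj
          rw [if_neg (Nat.ne_of_lt (Finset.mem_range.mp hj))]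
        rw [Finset.sum_congr rfl hne]
        by_cases h2 : m = n
        · rw [if_pos h2, ← h2]
          have e1 : ∑ j ∈ Finset.range m, (if j ≤ m then r ^ (m - j) * |Φ| else 0)
              = ∑ j ∈ Finset.range m, r ^ (m - j) * |Φ| :=
            Finset.sum_congr rfl fun j hj =>
              if_pos (le_of_lt (Finset.mem_range.mp hj))
          have e2 : ∑ j ∈ Finset.range m, r ^ (m - j) * |Φ|
              = ∑ j ∈ Finset.range m, r ^ (j + 1) * |Φ| := by
            rw [← Finset.sum_range_reflect (fun j => r ^ (j+1) * |Φ|) m]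
            refine Finset.sum_congr rfl fun j hj => ?_
            have hj' := Finset.mem_range.mp hj
            congr 2
            omega
          have e3 : ∑ j ∈ Finset.range m, r ^ (j + 1) * |Φ|
              = |Φ| * ((∑ j ∈ Finset.range (m+1), r ^ j) - 1) := by
            rw [Finset.sum_range_succ' (fun j => r ^ j) m]
            simp [Finset.mul_sum, mul_comm]
          rw [e1, e2, e3]
          have habs : |Φ + r ^ (m+1)| ≤ |Φ| + r ^ (m+1) := by
            calc |Φ + r ^ (m+1)| ≤ |Φ| + |r ^ (m+1)| := abs_add_le _ _
            _ = |Φ| + r ^ (m+1) := by rw [abs_of_pos (pow_pos hr0 _)]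
          have := key m
          linarith
        · rw [if_neg h2]
          have hmn : m < n := lt_of_le_of_ne (Nat.lt_succ_iff.mp hm) h2
          have e1 : ∑ j ∈ Finset.range n, (if j ≤ m then r ^ (m - j) * |Φ| else 0)
              = ∑ j ∈ Finset.range (m+1), r ^ (m - j) * |Φ| := by
            have hzero : ∀ x ∈ Finset.range n, x ∉ Finset.range (m+1) →
                (if x ≤ m then r ^ (m - x) * |Φ| else 0) = 0 := by
              intro x _ hx
              rw [if_neg]
              intro hxm
              exact hx (Finset.mem_range.mpr (Nat.lt_succ_of_le hxm))
            rw [← Finset.sum_subset (Finset.range_subset_range.mpr hmn) hzero]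
            exact Finset.sum_congr rfl fun j hj =>
              if_pos (Nat.lt_succ_iff.mp (Finset.mem_range.mp hj))
          have e2 : ∑ j ∈ Finset.range (m+1), r ^ (m - j) * |Φ|
              = |Φ| * ∑ j ∈ Finset.range (m+1), r ^ j := by
            rw [Finset.mul_sum, ← Finset.sum_range_reflect (fun j => |Φ| * r ^ j) (m+1)]
            refine Finset.sum_congr rfl fun j hj => ?_
            rw [mul_comm]
            congr 2
          rw [e1, e2]
          exact key m
end

section
/- Let l ≥ 1 and let w : Ω → ℝ^{2l} be a random vector whose law is the centered multivariate Gaussian distribution N(0, Σ) with covariance matrix Σ ∈ M_{2l}(ℝ) symmetric positive semidefinite. Then E[∏_{a=1}^{2l} w_a] = Hf(Σ) := Σ_{pairings} ∏_{{a,b} ∈ π} Σ_{ab}, where the sum runs over all partitions π of {1,…,2l} into l disjoint two-element subsets (equivalently, over all decompositions {1,…,2l} = {i'₁,…,i'_l} ⊔ {j'₁,…,j'_l} with i'₁<⋯<i'_l, j'₁<⋯<j'_l and i'_w < j'_w for each w, summing the products Σ_{i'₁j'₁}⋯Σ_{i'_lj'_l}). -/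
open Matrix MeasureTheory ProbabilityTheory
open scoped Classical

/-- The standard Gaussian measure on `ι → ℝ`: the product of standard normal laws. -/
noncomputable def stdGaussianPi (ι : Type*) [Fintype ι] : Measure (ι → ℝ) :=
  Measure.pi fun _ : ι => gaussianReal 0 1

/-- A measure on `ι → ℝ` is the centered multivariate Gaussian `N(0, S)` if it is the
pushforward of the standard Gaussian by a linear map `L` with `L Lᵀ = S`. -/
def IsCenteredGaussian {ι : Type*} [Fintype ι] (ν : Measure (ι → ℝ))
    (S : Matrix ι ι ℝ) : Prop :=
  ∃ L : Matrix ι ι ℝ, L * Lᵀ = S ∧ ν = (stdGaussianPi ι).map L.mulVec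

/-- The hafnian of a square matrix of even order `m = 2l`: the sum over all perfect
matchings of `{0,…,m−1}` (encoded as fixed-point-free involutions `σ`, each pair of the
matching being `{a, σ a}` with `a < σ a`) of the products `∏_{a < σ a} S a (σ a)`. -/
noncomputable def hafnian {m : ℕ} (S : Matrix (Fin m) (Fin m) ℝ) : ℝ :=
  ∑ σ ∈ Finset.univ.filter
      (fun σ : Equiv.Perm (Fin m) => σ * σ = 1 ∧ ∀ a, σ a ≠ a),
    ∏ a ∈ Finset.univ.filter (fun a : Fin m => a < σ a), S a (σ a)

/-! ### Auxiliary material for the proof -/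

open Finset Real
open scoped ENNReal NNReal

/-- number of perfect matchings of a set of size `n`. -/
def matchNum : ℕ → ℕ
  | 0 => 1
  | 1 => 0
  | (n+2) => (n+1) * matchNum n

lemma matchNum_rec (c : ℕ) (hc : 1 ≤ c) : matchNum c = (c - 1) * matchNum (c - 2) := by
  match c, hc with
  | 1, _ => simp [matchNum]
  | (n+2), _ => simp [matchNum]

section Count

variable {α β : Type*} [Fintype α] [Fintype β] [DecidableEq α] [DecidableEq β]

/-- fixed-point-free involutions of `s` preserving the fibers of `f`, identity off `s`. -/
noncomputable def invSet (f : α → β) (s : Finset α) : Finset (Equiv.Perm α) :=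
  Finset.univ.filter fun σ => σ * σ = 1 ∧
    (∀ a ∈ s, σ a ∈ s ∧ σ a ≠ a ∧ f (σ a) = f a) ∧ ∀ a ∉ s, σ a = a

lemma invSet_card (f : α → β) : ∀ (n : ℕ) (s : Finset α), s.card = n →
    (invSet f s).card = ∏ j : β, matchNum ((s.filter fun x => f x = j).card) := by
  intro n
  induction n using Nat.strong_induction_on with
  | _ n ih =>
    intro s hs
    rcases s.eq_empty_or_nonempty with rfl | ⟨a, ha⟩
    · have h1 : invSet f ∅ = {1} := by
        ext σ
        simp only [invSet, Finset.mem_filter, Finset.mem_univ, true_and,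
          Finset.notMem_empty, Finset.mem_singleton]
        constructor
        · rintro ⟨-, -, h⟩
          exact Equiv.ext fun x => h x (by simp)
        · rintro rfl
          refine ⟨by group, by simp, by simp⟩
      simp [h1, matchNum]
    · -- notation
      set c : ℕ := (s.filter fun x => f x = f a).card with hc
      have hcpos : 1 ≤ c := Finset.card_pos.mpr ⟨a, by simp [ha]⟩
      set T : Finset α := (s.filter fun x => f x = f a).erase a with hT
      have hTcard : T.card = c - 1 := Finset.card_erase_of_mem (by simp [ha])
      -- every σ in invSet maps a into T
      have hmaps : ∀ σ ∈ invSet f s, σ a ∈ T := by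
        intro σ hσ
        simp only [invSet, Finset.mem_filter, Finset.mem_univ, true_and] at hσ
        obtain ⟨-, hin, -⟩ := hσ
        obtain ⟨h1, h2, h3⟩ := hin a ha
        simp [hT, h1, h2, h3]
      have step1 : (invSet f s).card
          = ∑ b ∈ T, ((invSet f s).filter fun σ => σ a = b).card :=
        Finset.card_eq_sum_card_fiberwise hmaps
      -- the fiber over b is in bijection with invSet f (s \ {a, b})
      have step2 : ∀ b ∈ T, ((invSet f s).filter fun σ => σ a = b).card
          = (invSet f (s \ {a, b})).card := by
        intro b hb
        obtain ⟨hba, hbf⟩ : b ≠ a ∧ b ∈ s ∧ f b = f a := by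
          simpa [hT, and_comm] using hb
        obtain ⟨hbs, hbfa⟩ := hbf
        refine Finset.card_nbij' (fun σ => σ * Equiv.swap a b)
          (fun τ => τ * Equiv.swap a b) ?_ ?_ ?_ ?_
        · -- forward
          intro σ hσ
          simp only [Finset.mem_coe, Finset.mem_filter, Finset.mem_univ, true_and, invSet] at hσ ⊢
          obtain ⟨⟨hσ2, hin, hout⟩, hab⟩ := hσ
          have hinv : ∀ x, σ (σ x) = x := by
            intro x
            rw [← Equiv.Perm.mul_apply, hσ2, Equiv.Perm.one_apply]
          have hbb : σ b = a := by rw [← hab, hinv]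
          have happ : ∀ x, (σ * Equiv.swap a b) x = σ (Equiv.swap a b x) := fun x => rfl
          have hcomm : Equiv.swap a b * σ = σ * Equiv.swap a b := by
            rw [Equiv.mul_swap_eq_swap_mul, hab, hbb, Equiv.swap_comm]
          refine ⟨?_, ?_, ?_⟩
          · calc σ * Equiv.swap a b * (σ * Equiv.swap a b)
                = σ * (Equiv.swap a b * σ) * Equiv.swap a b := by group
              _ = σ * (σ * Equiv.swap a b) * Equiv.swap a b := by rw [hcomm]
              _ = (σ * σ) * (Equiv.swap a b * Equiv.swap a b) := by group
              _ = 1 := by rw [hσ2, Equiv.swap_mul_self, mul_one]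
          · intro x hx
            rw [Finset.mem_sdiff] at hx
            obtain ⟨hxs, hxab⟩ := hx
            simp only [Finset.mem_insert, Finset.mem_singleton, not_or] at hxab
            obtain ⟨hxa, hxb⟩ := hxab
            rw [happ, Equiv.swap_apply_of_ne_of_ne hxa hxb]
            obtain ⟨h1, h2, h3⟩ := hin x hxs
            have hσxa : σ x ≠ a := by
              intro h
              apply hxb
              rw [← hinv x, h, hab]
            have hσxb : σ x ≠ b := by
              intro h
              apply hxa
              rw [← hinv x, h, hbb]
            refine ⟨by rw [Finset.mem_sdiff]; exact ⟨h1, by simp [hσxa, hσxb]⟩, h2, h3⟩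
          · intro x hx
            rw [Finset.mem_sdiff, not_and_or, not_not] at hx
            rcases hx with hx | hx
            · -- x ∉ s, hence x ≠ a, b
              have hxa : x ≠ a := fun h => hx (h ▸ ha)
              have hxb : x ≠ b := fun h => hx (h ▸ hbs)
              rw [happ, Equiv.swap_apply_of_ne_of_ne hxa hxb]
              exact hout x hx
            · simp only [Finset.mem_insert, Finset.mem_singleton] at hx
              rcases hx with rfl | rfl
              · rw [happ, Equiv.swap_apply_left, hbb]
              · rw [happ, Equiv.swap_apply_right, hab]
        · -- backward
          intro τ hτ
          simp only [Finset.mem_coe, Finset.mem_filter, Finset.mem_univ, true_and, invSet] at hτ ⊢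
          obtain ⟨hτ2, hin, hout⟩ := hτ
          have hna : a ∉ s \ ({a, b} : Finset α) := by simp
          have hnb : b ∉ s \ ({a, b} : Finset α) := by simp
          have hτa : τ a = a := hout a hna
          have hτb : τ b = b := hout b hnb
          have happ : ∀ x, (τ * Equiv.swap a b) x = τ (Equiv.swap a b x) := fun x => rfl
          have hcomm : Equiv.swap a b * τ = τ * Equiv.swap a b := by
            rw [Equiv.mul_swap_eq_swap_mul, hτa, hτb]
          refine ⟨⟨?_, ?_, ?_⟩, ?_⟩
          · calc τ * Equiv.swap a b * (τ * Equiv.swap a b)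
                = τ * (Equiv.swap a b * τ) * Equiv.swap a b := by group
              _ = τ * (τ * Equiv.swap a b) * Equiv.swap a b := by rw [hcomm]
              _ = (τ * τ) * (Equiv.swap a b * Equiv.swap a b) := by group
              _ = 1 := by rw [hτ2, Equiv.swap_mul_self, mul_one]
          · intro x hxs
            rcases eq_or_ne x a with rfl | hxa
            · rw [happ, Equiv.swap_apply_left, hτb]
              exact ⟨hbs, hba, hbfa⟩
            rcases eq_or_ne x b with rfl | hxb
            · rw [happ, Equiv.swap_apply_right, hτa]
              exact ⟨ha, fun h => hba h.symm, hbfa.symm⟩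
            · rw [happ, Equiv.swap_apply_of_ne_of_ne hxa hxb]
              have hxmem : x ∈ s \ ({a, b} : Finset α) := by
                rw [Finset.mem_sdiff]
                exact ⟨hxs, by simp [hxa, hxb]⟩
              obtain ⟨h1, h2, h3⟩ := hin x hxmem
              rw [Finset.mem_sdiff] at h1
              exact ⟨h1.1, h2, h3⟩
          · intro x hxs
            have hxa : x ≠ a := fun h => hxs (h ▸ ha)
            have hxb : x ≠ b := fun h => hxs (h ▸ hbs)
            rw [happ, Equiv.swap_apply_of_ne_of_ne hxa hxb]
            exact hout x (by rw [Finset.mem_sdiff]; exact fun h => hxs h.1)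
          · rw [happ, Equiv.swap_apply_left, hτb]
        · intro σ _
          show σ * Equiv.swap a b * Equiv.swap a b = σ
          rw [mul_assoc, Equiv.swap_mul_self, mul_one]
        · intro τ _
          show τ * Equiv.swap a b * Equiv.swap a b = τ
          rw [mul_assoc, Equiv.swap_mul_self, mul_one]
      -- apply IH
      have hn2 : n - 2 < n := by
        have : 1 ≤ n := hs ▸ Finset.card_pos.mpr ⟨a, ha⟩
        omega
      have step3 : ∀ b ∈ T, (invSet f (s \ {a, b})).card
          = matchNum (c - 2) * ∏ j ∈ Finset.univ.erase (f a),
              matchNum ((s.filter fun x => f x = j).card) := by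
        intro b hb
        obtain ⟨hba, hbf⟩ : b ≠ a ∧ b ∈ s ∧ f b = f a := by
          simpa [hT, and_comm] using hb
        obtain ⟨hbs, hbfa⟩ := hbf
        have hsub : ({a, b} : Finset α) ⊆ s := by
          intro x hx
          simp only [Finset.mem_insert, Finset.mem_singleton] at hx
          rcases hx with rfl | rfl
          · exact ha
          · exact hbs
        have hcardab : ({a, b} : Finset α).card = 2 := Finset.card_pair (fun h => hba h.symm)
        have hcard' : (s \ ({a, b} : Finset α)).card = n - 2 := by
          rw [Finset.card_sdiff_of_subset hsub, hcardab, hs]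
        rw [ih (n - 2) hn2 _ hcard']
        have hsplit : ∏ j : β, matchNum (((s \ ({a,b} : Finset α)).filter fun x => f x = j).card)
            = matchNum (((s \ ({a,b} : Finset α)).filter fun x => f x = f a).card)
              * ∏ j ∈ Finset.univ.erase (f a),
                  matchNum (((s \ ({a,b} : Finset α)).filter fun x => f x = j).card) :=
          (Finset.mul_prod_erase Finset.univ _ (Finset.mem_univ (f a))).symm
        rw [hsplit]
        congr 1
        · -- the f a fiber loses exactly a and b
          have hfe : ((s \ ({a,b} : Finset α)).filter fun x => f x = f a)
              = (s.filter fun x => f x = f a) \ ({a, b} : Finset α) := by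
            ext x
            simp only [Finset.mem_filter, Finset.mem_sdiff]
            tauto
          rw [hfe, Finset.card_sdiff_of_subset, hcardab]
          intro x hx
          simp only [Finset.mem_insert, Finset.mem_singleton] at hx
          rcases hx with rfl | rfl
          · simp [ha]
          · simp [hbs, hbfa]
        · refine Finset.prod_congr rfl fun j hj => ?_
          have hjne : j ≠ f a := by
            simp only [Finset.mem_erase] at hj
            exact hj.1
          have heq : ((s \ ({a,b} : Finset α)).filter fun x => f x = j)
              = s.filter fun x => f x = j := by
            ext x
            simp only [Finset.mem_filter, Finset.mem_sdiff, Finset.mem_insert,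
              Finset.mem_singleton]
            constructor
            · rintro ⟨⟨h1, -⟩, h2⟩
              exact ⟨h1, h2⟩
            · rintro ⟨h1, h2⟩
              refine ⟨⟨h1, ?_⟩, h2⟩
              rintro (rfl | rfl)
              · exact hjne h2.symm
              · exact hjne (hbfa ▸ h2).symm
          rw [heq]
      calc (invSet f s).card
          = ∑ b ∈ T, ((invSet f s).filter fun σ => σ a = b).card := step1
        _ = ∑ b ∈ T, matchNum (c - 2) * ∏ j ∈ Finset.univ.erase (f a),
              matchNum ((s.filter fun x => f x = j).card) := by
            refine Finset.sum_congr rfl fun b hb => ?_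
            rw [step2 b hb, step3 b hb]
        _ = (c - 1) * (matchNum (c - 2) * ∏ j ∈ Finset.univ.erase (f a),
              matchNum ((s.filter fun x => f x = j).card)) := by
            rw [Finset.sum_const, hTcard, smul_eq_mul]
        _ = ∏ j : β, matchNum ((s.filter fun x => f x = j).card) := by
            rw [← Finset.mul_prod_erase Finset.univ _ (Finset.mem_univ (f a)),
              ← hc, matchNum_rec c hcpos, mul_assoc]

end Count

/-! ### Gaussian moments -/

noncomputable def Jg (k : ℕ) : ℝ := ∫ t : ℝ, t ^ k * Real.exp (-(1/2) * t ^ 2)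

lemma intJ (k : ℕ) : Integrable (fun t : ℝ => t ^ k * Real.exp (-(1/2) * t ^ 2)) := by
  have h := integrable_rpow_mul_exp_neg_mul_sq (b := 1/2) (by norm_num)
    (s := (k : ℝ)) (by exact_mod_cast lt_of_lt_of_le (by norm_num : (-1:ℝ) < 0) (Nat.cast_nonneg k))
  simpa [Real.rpow_natCast] using h

lemma hasDeriv_aux (k : ℕ) (t : ℝ) :
    HasDerivAt (fun t : ℝ => t ^ (k+1) * Real.exp (-(1/2) * t ^ 2))
      (((k:ℝ)+1) * (t ^ k * Real.exp (-(1/2) * t ^ 2))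
        - t ^ (k+2) * Real.exp (-(1/2) * t ^ 2)) t := by
  have h1 : HasDerivAt (fun x : ℝ => x ^ (k+1)) (((k:ℝ)+1) * t ^ k) t := by
    simpa using hasDerivAt_pow (k+1) t
  have h2 : HasDerivAt (fun x : ℝ => -(1/2) * x ^ 2) (-(1/2) * (2 * t ^ 1)) t :=
    (hasDerivAt_pow 2 t).const_mul (-(1/2))
  have h3 := h2.exp
  have h := h1.mul h3
  refine h.congr_deriv ?_
  ring

lemma Jg_rec (k : ℕ) : Jg (k + 2) = ((k:ℝ) + 1) * Jg k := by
  have hA : Integrable (fun t : ℝ => ((k:ℝ)+1) * (t ^ k * Real.exp (-(1/2) * t ^ 2))) :=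
    (intJ k).const_mul _
  have hint : Integrable (fun t : ℝ =>
      ((k:ℝ)+1) * (t ^ k * Real.exp (-(1/2) * t ^ 2))
        - t ^ (k+2) * Real.exp (-(1/2) * t ^ 2)) := hA.sub (intJ (k+2))
  have h0 : ∫ t : ℝ, (((k:ℝ)+1) * (t ^ k * Real.exp (-(1/2) * t ^ 2))
      - t ^ (k+2) * Real.exp (-(1/2) * t ^ 2)) = 0 :=
    integral_eq_zero_of_hasDerivAt_of_integrable (hasDeriv_aux k) hint (intJ (k+1))
  rw [integral_sub hA (intJ (k+2)), integral_const_mul, sub_eq_zero] at h0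
  exact h0.symm

lemma Jg_zero : Jg 0 = Real.sqrt (2 * π) := by
  have h := integral_gaussian (1/2)
  simp only [Jg, pow_zero, one_mul]
  rw [h]
  norm_num
  ring

lemma Jg_one : Jg 1 = 0 := by
  have hd : ∀ t : ℝ, HasDerivAt (fun t : ℝ => -Real.exp (-(1/2) * t ^ 2))
      (t ^ 1 * Real.exp (-(1/2) * t ^ 2)) t := by
    intro t
    have h2 : HasDerivAt (fun x : ℝ => -(1/2) * x ^ 2) (-(1/2) * (2 * t ^ 1)) t :=
      (hasDerivAt_pow 2 t).const_mul (-(1/2))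
    have h3 := h2.exp.neg
    refine h3.congr_deriv ?_
    ring
  have hf : Integrable (fun t : ℝ => -Real.exp (-(1/2) * t ^ 2)) := by
    refine ((intJ 0).neg).congr (Filter.Eventually.of_forall fun t => ?_)
    simp
  have h0 := integral_eq_zero_of_hasDerivAt_of_integrable hd (intJ 1) hf
  simpa [Jg] using h0

lemma sqrt_two_pi_pos : (0:ℝ) < Real.sqrt (2 * π) :=
  Real.sqrt_pos.mpr (by positivity)

lemma Jg_eq (k : ℕ) : Jg k = Real.sqrt (2 * π) * matchNum k := by
  induction k using Nat.strong_induction_on with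
  | _ k ih =>
    match k with
    | 0 => simp [Jg_zero, matchNum]
    | 1 => simp [Jg_one, matchNum]
    | (k+2) =>
      rw [Jg_rec k, ih k (by omega)]
      simp only [matchNum]
      push_cast
      ring

lemma pdf_eq (t : ℝ) : gaussianPDFReal 0 1 t
    = (Real.sqrt (2 * π))⁻¹ * Real.exp (-(1/2) * t ^ 2) := by
  simp only [gaussianPDFReal, NNReal.coe_one, mul_one, sub_zero]
  congr 1
  ring

lemma gaussian_withDensity : gaussianReal 0 1
    = volume.withDensity (fun t => ((gaussianPDFReal 0 1 t).toNNReal : ℝ≥0∞)) := by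
  rw [gaussianReal_of_var_ne_zero 0 one_ne_zero]
  rfl

lemma integral_gaussianReal (g : ℝ → ℝ) :
    ∫ t, g t ∂(gaussianReal 0 1) = ∫ t, gaussianPDFReal 0 1 t * g t := by
  rw [gaussian_withDensity,
    integral_withDensity_eq_integral_smul (measurable_gaussianPDFReal 0 1).real_toNNReal g]
  congr 1
  funext t
  rw [NNReal.smul_def, Real.coe_toNNReal _ (gaussianPDFReal_nonneg 0 1 t)]
  rfl

lemma integrable_gaussianReal_iff (g : ℝ → ℝ) :
    Integrable g (gaussianReal 0 1)
      ↔ Integrable (fun t => gaussianPDFReal 0 1 t * g t) := by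
  rw [gaussian_withDensity,
    integrable_withDensity_iff_integrable_smul (measurable_gaussianPDFReal 0 1).real_toNNReal]
  constructor <;> intro h <;> refine h.congr (Filter.Eventually.of_forall fun t => ?_) <;>
    simp [NNReal.smul_def, Real.coe_toNNReal _ (gaussianPDFReal_nonneg 0 1 t)]

lemma gmom_int (k : ℕ) : Integrable (fun t : ℝ => t ^ k) (gaussianReal 0 1) := by
  rw [integrable_gaussianReal_iff]
  refine ((intJ k).const_mul ((Real.sqrt (2 * π))⁻¹)).congr
    (Filter.Eventually.of_forall fun t => ?_)
  simp only [pdf_eq]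
  ring

lemma gmom (k : ℕ) : ∫ t, t ^ k ∂(gaussianReal 0 1) = matchNum k := by
  rw [integral_gaussianReal]
  have h : ∀ t : ℝ, gaussianPDFReal 0 1 t * t ^ k
      = (Real.sqrt (2 * π))⁻¹ * (t ^ k * Real.exp (-(1/2) * t ^ 2)) := by
    intro t
    rw [pdf_eq t]
    ring
  simp_rw [h]
  rw [integral_const_mul]
  rw [show (∫ t : ℝ, t ^ k * Real.exp (-(1/2) * t ^ 2)) = Jg k from rfl, Jg_eq k,
    ← mul_assoc, inv_mul_cancel₀ (ne_of_gt sqrt_two_pi_pos), one_mul]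

/-! ### Product structure of the standard Gaussian -/

lemma stdGaussianPi_integral {ι : Type*} [Fintype ι] (g : ι → ℝ → ℝ) :
    ∫ x, ∏ i, g i (x i) ∂(stdGaussianPi ι) = ∏ i, ∫ t, g i t ∂(gaussianReal 0 1) := by
  letI : MeasureSpace ℝ := { volume := gaussianReal 0 1 }
  haveI : SigmaFinite (volume : Measure ℝ) := by
    show SigmaFinite (gaussianReal 0 1)
    infer_instance
  exact MeasureTheory.integral_fintype_prod_eq_prod g

lemma stdGaussianPi_integrable {ι : Type*} [Fintype ι] (g : ι → ℝ → ℝ)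
    (hg : ∀ i, Integrable (g i) (gaussianReal 0 1)) :
    Integrable (fun x : ι → ℝ => ∏ i, g i (x i)) (stdGaussianPi ι) := by
  letI : MeasureSpace ℝ := { volume := gaussianReal 0 1 }
  haveI : SigmaFinite (volume : Measure ℝ) := by
    show SigmaFinite (gaussianReal 0 1)
    infer_instance
  exact MeasureTheory.Integrable.fintype_prod (f := g) hg

/-! ### Reindexing the sum over fiber-preserving functions -/

lemma sum_invariant_eq_prod {n : ℕ} (L : Matrix (Fin n) (Fin n) ℝ) (σ : Equiv.Perm (Fin n))
    (hσ2 : σ * σ = 1) (hfpf : ∀ a, σ a ≠ a) :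
    ∑ f ∈ (Finset.univ : Finset (Fin n → Fin n)).filter (fun f => ∀ a, f (σ a) = f a),
        ∏ a, L a (f a)
      = ∏ a ∈ Finset.univ.filter (fun a : Fin n => a < σ a), (L * Lᵀ) a (σ a) := by
  have hinv : ∀ x, σ (σ x) = x := fun x => by
    rw [← Equiv.Perm.mul_apply, hσ2, Equiv.Perm.one_apply]
  set P : Finset (Fin n) := Finset.univ.filter (fun a => a < σ a) with hP
  have hmemP : ∀ a : Fin n, a ∈ P ↔ a < σ a := fun a => by simp [hP]
  have hnotP : ∀ a : Fin n, a ∉ P → σ a ∈ P := by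
    intro a ha
    rw [hmemP] at ha ⊢
    rw [hinv]
    exact lt_of_le_of_ne (not_lt.mp ha) (hfpf a)
  have hPdisj : ∀ a : Fin n, a ∈ P → σ a ∉ P := by
    intro a ha hσa
    rw [hmemP] at ha hσa
    rw [hinv] at hσa
    exact absurd (ha.trans hσa) (lt_irrefl a)
  have hcover : (Finset.univ : Finset (Fin n)) = P ∪ P.image σ := by
    ext a
    simp only [Finset.mem_union, Finset.mem_univ, true_iff, Finset.mem_image]
    by_cases h : a ∈ P
    · exact Or.inl h
    · exact Or.inr ⟨σ a, hnotP a h, hinv a⟩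
  have hdisj : Disjoint P (P.image σ) := by
    rw [Finset.disjoint_left]
    intro a ha hmem
    obtain ⟨b, hb, rfl⟩ := Finset.mem_image.mp hmem
    exact hPdisj b hb ha
  have hprodsplit : ∀ f : Fin n → Fin n, (∀ a, f (σ a) = f a) →
      ∏ a, L a (f a) = ∏ a ∈ P, (L a (f a) * L (σ a) (f a)) := by
    intro f hf
    rw [show (Finset.univ : Finset (Fin n)) = P ∪ P.image σ from hcover,
      Finset.prod_union hdisj, Finset.prod_image (fun a _ b _ h => σ.injective h),
      ← Finset.prod_mul_distrib]
    refine Finset.prod_congr rfl fun a _ => ?_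
    rw [hf a]
  have hstep : ∑ f ∈ (Finset.univ : Finset (Fin n → Fin n)).filter
        (fun f => ∀ a, f (σ a) = f a), ∏ a, L a (f a)
      = ∑ g ∈ (Finset.univ : Finset (↥P → Fin n)),
          ∏ a : ↥P, (L a.1 (g a) * L (σ a.1) (g a)) := by
    refine Finset.sum_nbij' (fun f (a : ↥P) => f a.1)
      (fun g a => if h : a ∈ P then g ⟨a, h⟩ else g ⟨σ a, hnotP a h⟩) ?_ ?_ ?_ ?_ ?_
    · intro f _
      exact Finset.mem_univ _
    · intro g _
      simp only [Finset.mem_filter, Finset.mem_univ, true_and]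
      intro a
      by_cases h : a ∈ P
      · rw [dif_pos h, dif_neg (hPdisj a h)]
        congr 1
        exact Subtype.ext (hinv a)
      · rw [dif_neg h, dif_pos (hnotP a h)]
    · intro f hf
      simp only [Finset.mem_filter, Finset.mem_univ, true_and] at hf
      funext a
      by_cases h : a ∈ P
      · simp only [dif_pos h]
      · simp only [dif_neg h]
        exact hf a
    · intro g _
      funext a
      simp only [dif_pos a.2]
    · intro f hf
      simp only [Finset.mem_filter, Finset.mem_univ, true_and] at hf
      rw [hprodsplit f hf,
        ← Finset.prod_attach P (fun a => L a (f a) * L (σ a) (f a)),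
        Finset.univ_eq_attach]
  rw [hstep, ← Fintype.piFinset_univ,
    ← Finset.prod_univ_sum (fun _ : ↥P => (Finset.univ : Finset (Fin n)))
      (fun (a : ↥P) j => L a.1 j * L (σ a.1) j)]
  rw [Finset.univ_eq_attach, Finset.prod_attach P (fun a => ∑ j, L a j * L (σ a) j)]
  refine Finset.prod_congr rfl fun a _ => ?_
  simp [Matrix.mul_apply, Matrix.transpose_apply]

/-- Wick's formula — the full mixed moment `E[∏ w_a]` of a centered
Gaussian vector of even dimension `2l` equals the hafnian of its covariance matrix. -/
theorem stmt_14 {Ω : Type*} [MeasureSpace Ω] [IsProbabilityMeasure (volume : Measure Ω)]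
    {l : ℕ} (hl : 1 ≤ l) (w : Ω → Fin (2 * l) → ℝ) (hwmeas : Measurable w)
    (S : Matrix (Fin (2 * l)) (Fin (2 * l)) ℝ) (hS : S.PosSemidef)
    (hw : IsCenteredGaussian (Measure.map w volume) S) :
    Integrable (fun ω => ∏ a, w ω a) volume ∧
      (∫ ω, ∏ a, w ω a) = hafnian S := by
  obtain ⟨L, hLS, hmap⟩ := hw
  set Γ := stdGaussianPi (Fin (2*l)) with hΓdef
  haveI : IsProbabilityMeasure Γ := by
    rw [hΓdef]
    unfold stdGaussianPi
    infer_instance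
  have hgmeas : Measurable (fun x : Fin (2*l) → ℝ => ∏ a, x a) :=
    Finset.measurable_prod Finset.univ fun a _ => measurable_pi_apply a
  have hmulmeas : Measurable (L.mulVec) := by
    apply measurable_pi_lambda
    intro a
    have h1 : (fun x : Fin (2*l) → ℝ => L.mulVec x a) = fun x => ∑ j, L a j * x j := rfl
    rw [h1]
    exact Finset.measurable_sum Finset.univ fun j _ => (measurable_pi_apply j).const_mul _
  set c : (Fin (2*l) → Fin (2*l)) → Fin (2*l) → ℕ :=
    fun f j => (Finset.univ.filter fun x => f x = j).card with hcdef
  have hexpand : (fun x : Fin (2*l) → ℝ => ∏ a, L.mulVec x a)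
      = fun x => ∑ f : Fin (2*l) → Fin (2*l),
          (∏ a, L a (f a)) * ∏ j, x j ^ (c f j) := by
    funext x
    have h1 : ∀ a, L.mulVec x a = ∑ j, L a j * x j := fun a => rfl
    simp_rw [h1]
    rw [Finset.prod_univ_sum, Fintype.piFinset_univ]
    refine Finset.sum_congr rfl fun f _ => ?_
    rw [Finset.prod_mul_distrib]
    congr 1
    rw [← Finset.prod_fiberwise_of_maps_to (fun a _ => Finset.mem_univ (f a))
      (fun a => x (f a))]
    refine Finset.prod_congr rfl fun j _ => ?_
    rw [Finset.prod_congr rfl (fun a ha => by rw [(Finset.mem_filter.mp ha).2]),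
      Finset.prod_const]
  have hintf : ∀ f : Fin (2*l) → Fin (2*l),
      Integrable (fun x : Fin (2*l) → ℝ => ∏ j, x j ^ (c f j)) Γ :=
    fun f => stdGaussianPi_integrable (fun j t => t ^ c f j) (fun j => gmom_int (c f j))
  have hintΓ : Integrable (fun x : Fin (2*l) → ℝ => ∏ a, L.mulVec x a) Γ := by
    rw [hexpand]
    exact integrable_finset_sum _ fun f _ => ((hintf f).const_mul _)
  -- the invariant-function count
  have hcount : ∀ f : Fin (2*l) → Fin (2*l),
      (∏ j, (matchNum (c f j) : ℝ))
        = ∑ σ ∈ Finset.univ.filter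
            (fun σ : Equiv.Perm (Fin (2*l)) => σ * σ = 1 ∧ ∀ a, σ a ≠ a),
            (if ∀ a, f (σ a) = f a then (1:ℝ) else 0) := by
    intro f
    rw [Finset.sum_boole]
    have h1 := invSet_card f (Finset.univ.card) Finset.univ rfl
    have h2 : invSet f Finset.univ
        = (Finset.univ.filter fun σ : Equiv.Perm (Fin (2*l)) =>
            σ * σ = 1 ∧ ∀ a, σ a ≠ a).filter (fun σ => ∀ a, f (σ a) = f a) := by
      ext σ
      simp only [invSet, Finset.mem_filter, Finset.mem_univ, true_and, true_implies,
        not_true, false_implies, and_true, forall_const, forall_and]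
      tauto
    rw [← h2, h1]
    push_cast
    rfl
  have hval : ∫ x, ∏ a, L.mulVec x a ∂Γ = hafnian (L * Lᵀ) := by
    rw [hexpand, integral_finset_sum _ (fun f _ => (hintf f).const_mul _)]
    have hterm : ∀ f : Fin (2*l) → Fin (2*l),
        (∫ x, (∏ a, L a (f a)) * ∏ j, x j ^ (c f j) ∂Γ)
          = (∏ a, L a (f a)) * ∏ j, (matchNum (c f j) : ℝ) := by
      intro f
      rw [integral_const_mul, hΓdef, stdGaussianPi_integral (fun j t => t ^ c f j)]
      congr 1
      exact Finset.prod_congr rfl fun j _ => gmom (c f j)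
    calc ∑ f : Fin (2*l) → Fin (2*l), ∫ x, (∏ a, L a (f a)) * ∏ j, x j ^ (c f j) ∂Γ
        = ∑ f : Fin (2*l) → Fin (2*l), (∏ a, L a (f a)) * ∏ j, (matchNum (c f j) : ℝ) :=
          Finset.sum_congr rfl fun f _ => hterm f
      _ = ∑ f : Fin (2*l) → Fin (2*l), ∑ σ ∈ Finset.univ.filter
            (fun σ : Equiv.Perm (Fin (2*l)) => σ * σ = 1 ∧ ∀ a, σ a ≠ a),
            (if ∀ a, f (σ a) = f a then (∏ a, L a (f a)) else 0) := by
          refine Finset.sum_congr rfl fun f _ => ?_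
          rw [hcount f, Finset.mul_sum]
          refine Finset.sum_congr rfl fun σ _ => ?_
          rw [mul_ite, mul_one, mul_zero]
      _ = ∑ σ ∈ Finset.univ.filter
            (fun σ : Equiv.Perm (Fin (2*l)) => σ * σ = 1 ∧ ∀ a, σ a ≠ a),
            ∑ f : Fin (2*l) → Fin (2*l),
            (if ∀ a, f (σ a) = f a then (∏ a, L a (f a)) else 0) := Finset.sum_comm
      _ = ∑ σ ∈ Finset.univ.filter
            (fun σ : Equiv.Perm (Fin (2*l)) => σ * σ = 1 ∧ ∀ a, σ a ≠ a),
            ∑ f ∈ (Finset.univ : Finset (Fin (2*l) → Fin (2*l))).filter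
              (fun f => ∀ a, f (σ a) = f a), ∏ a, L a (f a) := by
          refine Finset.sum_congr rfl fun σ _ => ?_
          rw [Finset.sum_filter]
      _ = hafnian (L * Lᵀ) := by
          refine Finset.sum_congr rfl fun σ hσ => ?_
          simp only [Finset.mem_filter, Finset.mem_univ, true_and] at hσ
          exact sum_invariant_eq_prod L σ hσ.1 hσ.2
  have hIntMap : Integrable (fun x : Fin (2*l) → ℝ => ∏ a, x a) (Measure.map w volume) := by
    rw [hmap, integrable_map_measure hgmeas.aestronglyMeasurable hmulmeas.aemeasurable]
    exact hintΓ
  constructor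
  · exact (integrable_map_measure hgmeas.aestronglyMeasurable
      hwmeas.aemeasurable).mp hIntMap
  · calc ∫ ω, ∏ a, w ω a
        = ∫ y, (∏ a, y a) ∂(Measure.map w volume) :=
          (integral_map hwmeas.aemeasurable hgmeas.aestronglyMeasurable).symm
      _ = ∫ x, ∏ a, L.mulVec x a ∂Γ := by
          rw [hmap, integral_map hmulmeas.aemeasurable hgmeas.aestronglyMeasurable]
      _ = hafnian (L * Lᵀ) := hval
      _ = hafnian S := by rw [hLS]
end

section
/- In the fixed-design ridge regression model with true parameters (W, a), assume additionally that the noise columns are uncorrelated across time with common covariance: E[ε(t) ε(s)ᵀ] = δ_{ts} Σ_ε for a fixed symmetric positive semidefinite Σ_ε ∈ M_q(ℝ). Then the covariance matrix Σ_a of the intercept estimator â_λ := (1/T)(Y − Ŵ_λᵀ X) 1_T is given by Σ_a = (1/T)·( 1 + (1/T)·trace( (I_N − λT R) R X 1_T 1_Tᵀ Xᵀ ) )·Σ_ε, i.e., for all k, l ∈ {1,…,q}, Cov((â_λ)_k, (â_λ)_l) = (1/T)(1 + (1/T) trace((I_N − λT R) R X 1_T 1_Tᵀ Xᵀ)) (Σ_ε)_{kl}.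 -/
open Matrix MeasureTheory

private lemma dot_shift {m n : Type*} [Fintype m] [Fintype n]
    (X : Matrix m n ℝ) (x : m → ℝ) (y : n → ℝ) :
    (Xᵀ *ᵥ x) ⬝ᵥ y = x ⬝ᵥ (X *ᵥ y) := by
  rw [Matrix.mulVec_transpose, ← Matrix.dotProduct_mulVec]

private lemma trace_vecMulVec {N : ℕ} (P : Matrix (Fin N) (Fin N) ℝ) (z : Fin N → ℝ) :
    Matrix.trace (P * vecMulVec z z) = z ⬝ᵥ (P *ᵥ z) := by
  calc Matrix.trace (P * vecMulVec z z)
      = ∑ i, ∑ j, P i j * (z j * z i) := by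
        simp [Matrix.trace, Matrix.mul_apply, Matrix.vecMulVec_apply]
    _ = ∑ i, ∑ j, z i * (P i j * z j) :=
        Finset.sum_congr rfl fun i _ => Finset.sum_congr rfl fun j _ => by ring
    _ = z ⬝ᵥ (P *ᵥ z) := by simp [dotProduct, Matrix.mulVec, Finset.mul_sum]

private lemma XJXt_eq {N T : ℕ} (X : Matrix (Fin N) (Fin T) ℝ) :
    X * Matrix.of (fun _ _ : Fin T => (1:ℝ)) * Xᵀ
      = vecMulVec (X *ᵥ fun _ => 1) (X *ᵥ fun _ => 1) := by
  ext i j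
  simp [Matrix.mul_apply, Matrix.vecMulVec_apply, Matrix.mulVec, dotProduct, Finset.sum_mul,
    Finset.mul_sum]

/-- in the fixed-design ridge regression model with centered,
time-uncorrelated noise of common covariance `Σ_ε`, the covariance matrix of the ridge
intercept estimator `â_λ` is
`Σ_a = (1/T)(1 + (1/T) trace((I − λT R) R X 1_T 1_Tᵀ Xᵀ)) Σ_ε`. -/
theorem stmt_19 {Ω : Type*} [MeasureSpace Ω] [IsProbabilityMeasure (volume : Measure Ω)]
    {N q T : ℕ} (hT : 1 ≤ T) (lam : ℝ) (hlam : 0 < lam)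
    (X : Matrix (Fin N) (Fin T) ℝ) (W : Matrix (Fin N) (Fin q) ℝ) (a : Fin q → ℝ)
    (ε : Fin T → Ω → Fin q → ℝ)
    (hε2 : ∀ t, MemLp (ε t) 2 volume)
    (hεmean : ∀ t, (∫ ω, ε t ω) = 0)
    (Sε : Matrix (Fin q) (Fin q) ℝ) (hSε : Sε.PosSemidef)
    (hεcov : ∀ (t s : Fin T) (k l : Fin q),
      (∫ ω, ε t ω k * ε s ω l) = if t = s then Sε k l else 0)
    (Y : Ω → Matrix (Fin q) (Fin T) ℝ)
    (hY : Y = fun ω => Matrix.of fun k t => a k + (Wᵀ * X) k t + ε t ω k)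
    (A : Matrix (Fin T) (Fin T) ℝ)
    (hA : A = 1 - (T : ℝ)⁻¹ • Matrix.of (fun _ _ => (1 : ℝ)))
    (R : Matrix (Fin N) (Fin N) ℝ)
    (hR : R = (X * A * Xᵀ + (lam * T) • (1 : Matrix (Fin N) (Fin N) ℝ))⁻¹)
    (What : Ω → Matrix (Fin N) (Fin q) ℝ)
    (hWhat : What = fun ω => R * X * A * (Y ω)ᵀ)
    (ahat : Ω → Fin q → ℝ)
    (hahat : ahat = fun ω => (T : ℝ)⁻¹ • (Y ω - (What ω)ᵀ * X).mulVec fun _ => 1) :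
    ∀ k l : Fin q,
      (∫ ω, ahat ω k * ahat ω l) - (∫ ω, ahat ω k) * (∫ ω, ahat ω l)
        = (T : ℝ)⁻¹ * (1 + (T : ℝ)⁻¹ *
            Matrix.trace (((1 : Matrix (Fin N) (Fin N) ℝ) - (lam * T) • R) * R
              * X * Matrix.of (fun _ _ : Fin T => (1 : ℝ)) * Xᵀ)) * Sε k l := by
  intro k l
  have hTpos : (0:ℝ) < T := by exact_mod_cast Nat.lt_of_lt_of_le Nat.zero_lt_one hT
  have hT0 : (T:ℝ) ≠ 0 := ne_of_gt hTpos
  set J : Matrix (Fin T) (Fin T) ℝ := Matrix.of (fun _ _ => (1 : ℝ)) with hJ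
  set u : Fin T → ℝ := fun _ => 1 with hu
  -- ## Matrix algebra facts
  have hAT : Aᵀ = A := by
    ext i j
    simp only [hA, hJ, transpose_apply, Matrix.sub_apply, Matrix.smul_apply, one_apply, of_apply, smul_eq_mul,
      mul_one]
    by_cases h : i = j <;> simp [h, eq_comm, hu]
  have hAu : A *ᵥ u = 0 := by
    rw [hA]
    ext i
    simp [Matrix.sub_mulVec, Matrix.smul_mulVec, Matrix.mulVec,
      dotProduct, hJ, hu, Finset.sum_const, hT0, Matrix.one_apply]
  have hJJ : J * J = (T:ℝ) • J := by
    ext i j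
    simp [Matrix.mul_apply, hJ, hu, Finset.sum_const]
  have hB : ((T:ℝ)⁻¹ • J) * ((T:ℝ)⁻¹ • J) = (T:ℝ)⁻¹ • J := by
    rw [smul_mul_assoc, mul_smul_comm, hJJ, smul_smul, smul_smul]
    congr 1
    field_simp
  have hAA : A * A = A := by
    rw [hA]
    calc (1 - (T:ℝ)⁻¹ • J) * (1 - (T:ℝ)⁻¹ • J)
        = 1 * (1 - (T:ℝ)⁻¹ • J) - ((T:ℝ)⁻¹ • J) * (1 - (T:ℝ)⁻¹ • J) := sub_mul _ _ _
      _ = (1 - (T:ℝ)⁻¹ • J) - (((T:ℝ)⁻¹ • J) * 1 - ((T:ℝ)⁻¹ • J) * ((T:ℝ)⁻¹ • J)) := by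
          rw [one_mul, mul_sub]
      _ = 1 - (T:ℝ)⁻¹ • J := by rw [mul_one, hB]; abel
  set M : Matrix (Fin N) (Fin N) ℝ := X * A * Xᵀ with hM
  have hMeq : M = (X * A) * (X * A)ᴴ := by
    rw [conjTranspose_eq_transpose_of_trivial, transpose_mul, hAT, hM,
      Matrix.mul_assoc, Matrix.mul_assoc, ← Matrix.mul_assoc A A, hAA]
  have hMpsd : M.PosSemidef := hMeq ▸ posSemidef_self_mul_conjTranspose (X * A)
  set S : Matrix (Fin N) (Fin N) ℝ := M + (lam * T) • 1 with hS
  have hST : Sᵀ = S := by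
    rw [hS, transpose_add, transpose_smul, transpose_one, hM, transpose_mul, transpose_mul,
      transpose_transpose, hAT, Matrix.mul_assoc]
  have hSpd : S.PosDef := by
    rw [Matrix.posDef_iff_dotProduct_mulVec]
    constructor
    · rw [Matrix.IsHermitian, conjTranspose_eq_transpose_of_trivial, hST]
    · intro x hx
      have h1 : (0:ℝ) ≤ x ⬝ᵥ M *ᵥ x := by simpa using hMpsd.dotProduct_mulVec_nonneg x
      have h2 : (0:ℝ) < x ⬝ᵥ x := by
        rcases lt_or_eq_of_le (Finset.sum_nonneg fun i _ => mul_self_nonneg (x i) :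
            (0:ℝ) ≤ x ⬝ᵥ x) with h | h
        · exact h
        · exact absurd (dotProduct_self_eq_zero.mp h.symm) hx
      have hx2 : x ⬝ᵥ S *ᵥ x = x ⬝ᵥ M *ᵥ x + (lam * T) * (x ⬝ᵥ x) := by
        rw [hS, Matrix.add_mulVec, dotProduct_add, Matrix.smul_mulVec,
          Matrix.one_mulVec, dotProduct_smul, smul_eq_mul]
      simp only [star_trivial]
      rw [hx2]
      positivity
  have hdet : IsUnit S.det := isUnit_iff_ne_zero.mpr (ne_of_gt hSpd.det_pos)
  have hRS : R * S = 1 := by rw [hR]; exact Matrix.nonsing_inv_mul _ hdet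
  have hRT : Rᵀ = R := by rw [hR, Matrix.transpose_nonsing_inv, hST]
  have hRM : R * M = 1 - (lam * T) • R := by
    have h := hRS
    rw [hS, mul_add, mul_smul_comm, mul_one] at h
    exact eq_sub_of_add_eq h
  -- ## The key decomposition of ahat
  set G : Matrix (Fin T) (Fin T) ℝ := A * (Xᵀ * (R * X)) with hG
  have hWX : ∀ ω, (What ω)ᵀ * X = Y ω * G := by
    intro ω
    rw [hWhat]
    simp only [transpose_mul, transpose_transpose, hAT, hRT, Matrix.mul_assoc, hG]
  set v : Fin T → ℝ := u - G *ᵥ u with hv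
  have hYv : ∀ ω, (Y ω - (What ω)ᵀ * X) *ᵥ u = Y ω *ᵥ v := by
    intro ω
    rw [hWX, hv, Matrix.sub_mulVec, ← Matrix.mulVec_mulVec, ← Matrix.mulVec_sub]
  set m : Fin q → ℝ := fun k' => (T:ℝ)⁻¹ * ∑ t, (a k' + (Wᵀ * X) k' t) * v t with hm
  have hakey : ∀ ω k', ahat ω k' = m k' + (T:ℝ)⁻¹ * ∑ t, v t * ε t ω k' := by
    intro ω k'
    rw [hahat]
    simp only [Pi.smul_apply, smul_eq_mul]
    rw [show (Y ω - (What ω)ᵀ * X) *ᵥ (fun _ => (1:ℝ)) = Y ω *ᵥ v from hYv ω]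
    rw [hY]
    simp only [Matrix.mulVec, dotProduct, Matrix.of_apply]
    rw [hm]
    simp only
    rw [show ∀ (g : Fin T → ℝ), (∑ t, (a k' + (Wᵀ * X) k' t + ε t ω k') * g t)
        = (∑ t, (a k' + (Wᵀ * X) k' t) * g t) + ∑ t, g t * ε t ω k' from
      fun g => by rw [← Finset.sum_add_distrib]; exact Finset.sum_congr rfl fun t _ => by ring]
    ring
  -- ## Integrability and moments
  have hcomp : ∀ (t : Fin T) (k' : Fin q), MemLp (fun ω => ε t ω k') 2 volume := by
    intro t k'
    have := (ContinuousLinearMap.proj (R := ℝ) (φ := fun _ : Fin q => ℝ) k').comp_memLp' (hε2 t)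
    exact this
  have hint1 : ∀ (t : Fin T) (k' : Fin q), Integrable (fun ω => ε t ω k') volume :=
    fun t k' => (hcomp t k').integrable one_le_two
  have hmean : ∀ (t : Fin T) (k' : Fin q), (∫ ω, ε t ω k') = 0 := by
    intro t k'
    have h := (ContinuousLinearMap.proj (R := ℝ) (φ := fun _ : Fin q => ℝ) k').integral_comp_comm
      ((hε2 t).integrable one_le_two)
    simp only [ContinuousLinearMap.proj_apply] at h
    rw [h, hεmean t]
    rfl
  have hintp : ∀ (t s : Fin T) (k' l' : Fin q),
      Integrable (fun ω => ε t ω k' * ε s ω l') volume := by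
    intro t s k' l'
    have h1 : MemLp (fun ω => ε t ω k' * ε s ω l') 1 volume := by
      have := MemLp.smul (hcomp s l') (hcomp t k')
        (p := 2) (q := 2) (r := 1)
      exact this
    exact h1.integrable le_rfl
  set f : Fin q → Ω → ℝ := fun k' ω => ∑ t, v t * ε t ω k' with hf
  have hintf : ∀ k', Integrable (f k') volume := fun k' =>
    integrable_finset_sum _ (fun t _ => (hint1 t k').const_mul (v t))
  have hmeanf : ∀ k', (∫ ω, f k' ω) = 0 := by
    intro k'
    rw [hf]
    rw [integral_finset_sum _ (fun t _ => (hint1 t k').const_mul (v t))]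
    simp [integral_const_mul, hmean]
  have hff : ∀ ω, f k ω * f l ω
      = ∑ t, ∑ s, (v t * v s) * (ε t ω k * ε s ω l) := by
    intro ω
    rw [hf]
    rw [Finset.sum_mul_sum]
    exact Finset.sum_congr rfl fun t _ => Finset.sum_congr rfl fun s _ => by ring
  have hintff : Integrable (fun ω => f k ω * f l ω) volume := by
    rw [show (fun ω => f k ω * f l ω)
        = fun ω => ∑ t, ∑ s, (v t * v s) * (ε t ω k * ε s ω l) from funext hff]
    exact integrable_finset_sum _ fun t _ =>
      integrable_finset_sum _ fun s _ => (hintp t s k l).const_mul _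
  have hintffval : (∫ ω, f k ω * f l ω) = (∑ t, v t * v t) * Sε k l := by
    rw [show (fun ω => f k ω * f l ω)
        = fun ω => ∑ t, ∑ s, (v t * v s) * (ε t ω k * ε s ω l) from funext hff]
    rw [integral_finset_sum _ fun t _ =>
      integrable_finset_sum _ fun s _ => (hintp t s k l).const_mul _]
    have h2 : ∀ t : Fin T, (∫ ω, ∑ s, (v t * v s) * (ε t ω k * ε s ω l))
        = v t * v t * Sε k l := by
      intro t
      rw [integral_finset_sum _ fun s _ => (hintp t s k l).const_mul _]
      have h3 : ∀ s : Fin T, (∫ ω, (v t * v s) * (ε t ω k * ε s ω l))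
          = if t = s then v t * v s * Sε k l else 0 := by
        intro s
        rw [integral_const_mul, hεcov]
        split <;> ring
      simp only [h3]
      simp
    rw [Finset.sum_congr rfl fun t _ => h2 t, ← Finset.sum_mul]
  -- the two integrals
  have I1 : ∀ k', (∫ ω, ahat ω k') = m k' := by
    intro k'
    rw [show (fun ω => ahat ω k') = fun ω => m k' + (T:ℝ)⁻¹ * f k' ω from
      funext fun ω => hakey ω k']
    rw [integral_add (integrable_const _) ((hintf k').const_mul _), integral_const,
      integral_const_mul, hmeanf]
    simp
  have I2 : (∫ ω, ahat ω k * ahat ω l)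
      = m k * m l + (T:ℝ)⁻¹ * (T:ℝ)⁻¹ * ((∑ t, v t * v t) * Sε k l) := by
    have hgl : Integrable (fun ω => m k * m l + (T:ℝ)⁻¹ * m k * f l ω) volume :=
      (integrable_const _).add ((hintf l).const_mul _)
    have hgr : Integrable
        (fun ω => (T:ℝ)⁻¹ * m l * f k ω + (T:ℝ)⁻¹ * (T:ℝ)⁻¹ * (f k ω * f l ω)) volume :=
      ((hintf k).const_mul _).add (hintff.const_mul _)
    rw [show (fun ω => ahat ω k * ahat ω l)
        = fun ω => (m k * m l + (T:ℝ)⁻¹ * m k * f l ω)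
            + ((T:ℝ)⁻¹ * m l * f k ω + (T:ℝ)⁻¹ * (T:ℝ)⁻¹ * (f k ω * f l ω)) from
      funext fun ω => by rw [hakey ω k, hakey ω l]; ring]
    have i1 := integral_const_mul (μ := volume) ((T:ℝ)⁻¹ * m k) (f l)
    rw [hmeanf l, mul_zero] at i1
    have i2 := integral_const_mul (μ := volume) ((T:ℝ)⁻¹ * m l) (f k)
    rw [hmeanf k, mul_zero] at i2
    have i3 := integral_const_mul (μ := volume) ((T:ℝ)⁻¹ * (T:ℝ)⁻¹) (fun ω => f k ω * f l ω)
    rw [hintffval] at i3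
    rw [integral_add hgl hgr,
      integral_add (integrable_const _) ((hintf l).const_mul _),
      integral_add ((hintf k).const_mul _) (hintff.const_mul _),
      i1, i2, i3, integral_const]
    simp
  -- ## dot product identities
  set z : Fin N → ℝ := X *ᵥ u with hz
  set w : Fin T → ℝ := Xᵀ *ᵥ (R *ᵥ z) with hw
  have hGu : G *ᵥ u = A *ᵥ w := by
    rw [hG, ← Matrix.mulVec_mulVec, ← Matrix.mulVec_mulVec, ← Matrix.mulVec_mulVec, hw, hz]
  have hvAw : v = u - A *ᵥ w := by rw [hv, hGu]
  have hdA : ∀ x : Fin T → ℝ, u ⬝ᵥ (A *ᵥ x) = 0 := by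
    intro x
    rw [dotProduct_mulVec, ← Matrix.mulVec_transpose, hAT, hu, hAu]
    exact zero_dotProduct x
  have hd4 : (A *ᵥ w) ⬝ᵥ (A *ᵥ w) = w ⬝ᵥ (A *ᵥ w) := by
    rw [dotProduct_mulVec (A *ᵥ w) A w, ← Matrix.mulVec_transpose, hAT,
      Matrix.mulVec_mulVec, hAA, dotProduct_comm]
  have hvv : v ⬝ᵥ v = (T:ℝ) + w ⬝ᵥ (A *ᵥ w) := by
    rw [hvAw, dotProduct_sub, sub_dotProduct, sub_dotProduct, hdA w,
      dotProduct_comm (A *ᵥ w) u, hdA w, hd4]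
    have huu : u ⬝ᵥ u = (T:ℝ) := by simp [dotProduct, hu]
    rw [huu]; ring
  have hP : R * (X * A * Xᵀ * R) = R - (lam * T) • (R * R) := by
    rw [← Matrix.mul_assoc, ← hM, hRM, sub_mul, one_mul, smul_mul_assoc]
  have e1 : w ⬝ᵥ (A *ᵥ w) = (R *ᵥ z) ⬝ᵥ (X *ᵥ (A *ᵥ w)) := dot_shift X (R *ᵥ z) (A *ᵥ w)
  have e2 : ∀ y, (R *ᵥ z) ⬝ᵥ y = z ⬝ᵥ (R *ᵥ y) := by
    intro y
    conv_lhs => rw [← hRT]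
    exact dot_shift R z y
  have hwAw : w ⬝ᵥ (A *ᵥ w) = z ⬝ᵥ ((R - (lam * T) • (R * R)) *ᵥ z) := by
    rw [e1, e2]
    rw [show X *ᵥ (A *ᵥ w) = (X * A * Xᵀ * R) *ᵥ z from by
      rw [hw]; simp only [Matrix.mulVec_mulVec, ← Matrix.mul_assoc]]
    rw [Matrix.mulVec_mulVec, hP]
  -- ## trace computation
  have htr : Matrix.trace (((1 : Matrix (Fin N) (Fin N) ℝ) - (lam * T) • R) * R
      * X * Matrix.of (fun _ _ : Fin T => (1 : ℝ)) * Xᵀ) = z ⬝ᵥ ((R - (lam * T) • (R * R)) *ᵥ z) := by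
    rw [show ((1 : Matrix (Fin N) (Fin N) ℝ) - (lam * T) • R) * R = R - (lam * T) • (R * R) from by
      rw [sub_mul, one_mul, smul_mul_assoc]]
    rw [Matrix.mul_assoc, Matrix.mul_assoc, ← Matrix.mul_assoc X, ← hJ, show X * J * Xᵀ = vecMulVec z z from XJXt_eq X]
    exact trace_vecMulVec _ z
  -- ## final assembly
  rw [I2, I1 k, I1 l, htr]
  rw [show (∑ t, v t * v t) = v ⬝ᵥ v from rfl, hvv, hwAw]
  field_simp
  ring
end
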